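/- arXiv:1909.13278 — 5 statements merged into one kernel-verified Lean document; each statement's English description precedes it below -/
import Mathlib

section
/- Let $v_1,\dots,v_q$ be elements of a commutative ring, and let $E$ be the $q\times q$ matrix whose $(i,j)$ entry is the elementary symmetric polynomial $e_{i-1}(v_1,\dots,\widehat{v_j},\dots,v_q)$ (omitting $v_j$), with $e_0 = 1$. Then $\det(E) = \prod_{1 \le i < j \le q} (v_i - v_j)$. -/
open Finset Polynomial

/-- The `k`-th elementary symmetric polynomial of the family `v` restricted to
the index set `A`. -/
def esymmOn {R : Type*} [CommRing R] {ι : Type*} [DecidableEq ι]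
    (A : Finset ι) (v : ι → R) (k : ℕ) : R :=
  ∑ s ∈ A.powersetCard k, ∏ i ∈ s, v i

/-- The matrix `Λ(b)` with `b 1, …, b q` in the first column, `-1` just above the
diagonal, and zeros elsewhere. -/
def lambdaMatrix {R : Type*} [CommRing R] (q : ℕ) (b : ℕ → R) :
    Matrix (Fin q) (Fin q) R :=
  Matrix.of fun i j =>
    if (j : ℕ) = 0 then b ((i : ℕ) + 1)
    else if (j : ℕ) = (i : ℕ) + 1 then -1 else 0

/-- The `(r+q) × (r+q)` Sylvester matrix of `A` (regarded as having degree `r`,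
with coefficients written `A = ∑ a_k t^(r-k)`) and `B` (regarded as having
degree `q`): the first `q` columns contain the coefficients `a_0, …, a_r` of `A`
starting on the diagonal, the last `r` columns those of `B`. -/
def sylvester {R : Type*} [CommRing R] (A B : Polynomial R) (r q : ℕ) :
    Matrix (Fin (r + q)) (Fin (r + q)) R :=
  Matrix.of fun i j =>
    if (j : ℕ) < q then
      (if (j : ℕ) ≤ (i : ℕ) ∧ (i : ℕ) ≤ (j : ℕ) + r then A.coeff (r + (j : ℕ) - (i : ℕ)) else 0)
    else
      (if (j : ℕ) - q ≤ (i : ℕ) ∧ (i : ℕ) ≤ ((j : ℕ) - q) + q then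
        B.coeff (q + ((j : ℕ) - q) - (i : ℕ)) else 0)

/-- The resultant of `A` (of degree `r`) and `B` (of degree `q`) with respect to
`t`: the determinant of their Sylvester matrix. -/
def resultant' {R : Type*} [CommRing R] (A B : Polynomial R) (r q : ℕ) : R :=
  (_root_.sylvester A B r q).det

section Aux
variable {R : Type*} [CommRing R]


lemma prod_pairs_lt_Ioi {q : ℕ} (f : Fin q → Fin q → R) :
    ∏ p ∈ Finset.univ.filter (fun p : Fin q × Fin q => p.1 < p.2), f p.1 p.2
      = ∏ i : Fin q, ∏ j ∈ Ioi i, f i j := by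
  rw [← Finset.univ_product_univ, Finset.prod_filter, Finset.prod_product]
  refine Finset.prod_congr rfl fun i _ => ?_
  rw [← Finset.prod_filter, Finset.filter_lt_eq_Ioi]

lemma prod_pairs_lt_Iio {q : ℕ} (f : Fin q → Fin q → R) :
    ∏ p ∈ Finset.univ.filter (fun p : Fin q × Fin q => p.1 < p.2), f p.1 p.2
      = ∏ j : Fin q, ∏ i ∈ Iio j, f i j := by
  rw [← Finset.univ_product_univ, Finset.prod_filter, Finset.prod_product_right]
  refine Finset.prod_congr rfl fun j _ => ?_
  rw [← Finset.prod_filter, Finset.filter_gt_eq_Iio]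

lemma esymm_expand {ι : Type*} [DecidableEq ι] (A : Finset ι) (v : ι → R) (x : R) :
    ∏ k ∈ A, (x - v k)
      = ∑ j ∈ Finset.range (A.card + 1), (-1) ^ j * esymmOn A v j * x ^ (A.card - j) := by
  have h := congrArg (Polynomial.eval x) (Multiset.prod_X_sub_X_eq_sum_esymm (A.val.map v))
  simp only [Polynomial.eval_multiset_prod, Multiset.map_map, Function.comp,
    Polynomial.eval_sub, Polynomial.eval_X, Polynomial.eval_C, Multiset.card_map,
    Polynomial.eval_finset_sum, Polynomial.eval_mul, Polynomial.eval_pow,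
    Polynomial.eval_one, Polynomial.eval_neg, Finset.esymm_map_val] at h
  rw [Finset.prod_eq_multiset_prod]
  simpa only [esymmOn, Finset.sum_eq_multiset_sum, Finset.card_def, mul_assoc] using h

lemma key (q : ℕ) (v : Fin q → R) :
    (∏ p ∈ Finset.univ.filter (fun p : Fin q × Fin q => p.1 < p.2), (v p.1 - v p.2)) *
      (Matrix.of fun i j : Fin q => esymmOn (Finset.univ.erase j) v (i : ℕ)).det
    = (∏ p ∈ Finset.univ.filter (fun p : Fin q × Fin q => p.1 < p.2), (v p.1 - v p.2)) ^ 2 := by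
  rcases Nat.eq_zero_or_pos q with hq | hq
  · subst hq; simp [Matrix.det_fin_zero]
  set S := Finset.univ.filter (fun p : Fin q × Fin q => p.1 < p.2) with hS
  set P := ∏ p ∈ S, (v p.1 - v p.2) with hP
  set E := (Matrix.of fun i j : Fin q => esymmOn (Finset.univ.erase j) v (i : ℕ)) with hE
  set M := (Matrix.of fun i j : Fin q => (-1 : R) ^ (i : ℕ) * E i j) with hM
  set W := (Matrix.of fun l i : Fin q => v l ^ (q - 1 - (i : ℕ))) with hW
  set ε := ∏ _p ∈ S, (-1 : R) with hε
  have hεε : ε * ε = 1 := by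
    rw [hε, ← Finset.prod_mul_distrib]; simp
  -- W * M is diagonal
  have hdiag : W * M = Matrix.diagonal (fun j => ∏ k ∈ Finset.univ.erase j, (v j - v k)) := by
    ext l j
    have hcard : (Finset.univ.erase j).card = q - 1 := by
      rw [Finset.card_erase_of_mem (Finset.mem_univ j), Finset.card_univ, Fintype.card_fin]
    have hexp := esymm_expand (Finset.univ.erase j) v (v l)
    rw [hcard, Nat.sub_add_cancel hq] at hexp
    have hentry : (W * M) l j = ∏ k ∈ Finset.univ.erase j, (v l - v k) := by
      rw [Matrix.mul_apply, hexp, Finset.sum_range]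
      refine Finset.sum_congr rfl fun i _ => ?_
      simp only [hW, hM, hE, Matrix.of_apply]
      ring
    rw [hentry]
    rcases eq_or_ne l j with rfl | hlj
    · simp [Matrix.diagonal_apply_eq]
    · rw [Matrix.diagonal_apply_ne _ hlj]
      exact Finset.prod_eq_zero (Finset.mem_erase.2 ⟨hlj, Finset.mem_univ l⟩) (by ring)
  -- determinant of W
  have hdetW : W.det = P := by
    have hWeq : W = (Matrix.vandermonde (fun i : Fin q => v i.rev)).submatrix
        Fin.revPerm Fin.revPerm := by
      ext l i
      simp only [hW, Matrix.of_apply, Matrix.submatrix_apply, Matrix.vandermonde_apply,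
        Fin.rev_rev, Fin.revPerm_apply, Fin.val_rev]
      congr 1
      omega
    rw [hWeq, Matrix.det_submatrix_equiv_self, Matrix.det_vandermonde,
      ← prod_pairs_lt_Ioi (fun i j => v j.rev - v i.rev), hP]
    refine Finset.prod_nbij' (fun p => (p.2.rev, p.1.rev)) (fun p => (p.2.rev, p.1.rev))
      ?_ ?_ ?_ ?_ ?_
    · intro p hp
      simp only [hS, Finset.mem_filter, Finset.mem_univ, true_and] at hp ⊢
      exact Fin.rev_lt_rev.2 hp
    · intro p hp
      simp only [hS, Finset.mem_filter, Finset.mem_univ, true_and] at hp ⊢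
      exact Fin.rev_lt_rev.2 hp
    · intro p _; simp [Fin.rev_rev]
    · intro p _; simp [Fin.rev_rev]
    · intro p _; rfl
  -- determinant of M
  have hdetM : M.det = ε * E.det := by
    rw [hM, Matrix.det_mul_column]
    congr 1
    rw [hε, prod_pairs_lt_Iio (fun _ _ => (-1 : R))]
    exact (Finset.prod_congr rfl fun j _ => by
      rw [Finset.prod_const, Fin.card_Iio]).symm
  -- the diagonal product
  have hdiagprod : (∏ j : Fin q, ∏ k ∈ Finset.univ.erase j, (v j - v k)) = ε * (P * P) := by
    have herase : ∀ j : Fin q, Finset.univ.erase j = Finset.Iio j ∪ Finset.Ioi j := by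
      intro j; ext k
      simp only [Finset.mem_erase, Finset.mem_univ, and_true, Finset.mem_union,
        Finset.mem_Iio, Finset.mem_Ioi]
      exact ne_iff_lt_or_gt
    have hdisj : ∀ j : Fin q, Disjoint (Finset.Iio j) (Finset.Ioi j) := by
      intro j
      rw [Finset.disjoint_left]
      intro k hk hk'
      exact absurd (Finset.mem_Ioi.1 hk') (not_lt_of_gt (Finset.mem_Iio.1 hk))
    calc (∏ j : Fin q, ∏ k ∈ Finset.univ.erase j, (v j - v k))
        = ∏ j : Fin q, ((∏ k ∈ Finset.Iio j, (v j - v k)) * ∏ k ∈ Finset.Ioi j, (v j - v k)) := by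
          refine Finset.prod_congr rfl fun j _ => ?_
          rw [herase j, Finset.prod_union (hdisj j)]
      _ = (∏ j : Fin q, ∏ k ∈ Finset.Iio j, (v j - v k)) *
            ∏ j : Fin q, ∏ k ∈ Finset.Ioi j, (v j - v k) := Finset.prod_mul_distrib
      _ = (∏ p ∈ S, (v p.2 - v p.1)) * P := by
          rw [hP, prod_pairs_lt_Iio (fun i j => v j - v i), prod_pairs_lt_Ioi (fun i j => v i - v j)]
      _ = ε * (P * P) := by
          have h1 : (∏ p ∈ S, (v p.2 - v p.1)) = ε * P := by
            rw [hε, hP, ← Finset.prod_mul_distrib]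
            exact Finset.prod_congr rfl fun p _ => by ring
          rw [h1]; ring
  -- combine
  have hcomb := congrArg Matrix.det hdiag
  rw [Matrix.det_mul, hdetW, hdetM, Matrix.det_diagonal, hdiagprod] at hcomb
  calc P * E.det = ε * ε * (P * E.det) := by rw [hεε, one_mul]
    _ = ε * (P * (ε * E.det)) := by ring
    _ = ε * (ε * (P * P)) := by rw [hcomb]
    _ = P ^ 2 := by rw [← mul_assoc, hεε]; ring


end Aux

theorem det_esymm_matrix {R : Type*} [CommRing R] (q : ℕ) (v : Fin q → R) :
    (Matrix.of fun i j : Fin q => esymmOn (Finset.univ.erase j) v (i : ℕ)).det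
      = ∏ p ∈ Finset.univ.filter (fun p : Fin q × Fin q => p.1 < p.2), (v p.1 - v p.2) := by
  have hpoly : (Matrix.of fun i j : Fin q =>
        esymmOn (Finset.univ.erase j) (MvPolynomial.X : Fin q → MvPolynomial (Fin q) ℤ)
          (i : ℕ)).det
      = ∏ p ∈ Finset.univ.filter (fun p : Fin q × Fin q => p.1 < p.2),
          (MvPolynomial.X p.1 - MvPolynomial.X p.2) := by
    have h := key q (MvPolynomial.X : Fin q → MvPolynomial (Fin q) ℤ)
    have hP0 : (∏ p ∈ Finset.univ.filter (fun p : Fin q × Fin q => p.1 < p.2),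
        ((MvPolynomial.X p.1 : MvPolynomial (Fin q) ℤ) - MvPolynomial.X p.2)) ≠ 0 := by
      rw [Finset.prod_ne_zero_iff]
      intro p hp h0
      have hne : p.1 ≠ p.2 := (Finset.mem_filter.1 hp).2.ne
      exact hne (MvPolynomial.X_injective (sub_eq_zero.1 h0))
    exact mul_left_cancel₀ hP0 (by rw [h, sq])
  have hm := congrArg (MvPolynomial.aeval v : MvPolynomial (Fin q) ℤ →ₐ[ℤ] R) hpoly
  rw [AlgHom.map_det, map_prod, AlgHom.mapMatrix_apply] at hm
  have hL : ((Matrix.of fun i j : Fin q =>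
        esymmOn (Finset.univ.erase j) (MvPolynomial.X : Fin q → MvPolynomial (Fin q) ℤ)
          (i : ℕ)).map (MvPolynomial.aeval v))
      = Matrix.of fun i j : Fin q => esymmOn (Finset.univ.erase j) v (i : ℕ) := by
    ext i j
    simp [Matrix.map_apply, esymmOn, map_sum, map_prod]
  rw [hL] at hm
  simpa using hm
end

section
/- Let $v_1,\dots,v_q$ be elements of a commutative ring. Define the $q\times q$ matrix $\Lambda$ with $\Lambda_{i,1} = e_i(v_1,\dots,v_q)$ for $i = 1,\dots,q$, $\Lambda_{i,i+1} = -1$ for $i = 1,\dots,q-1$, and all other entries zero. Define the $q\times q$ matrix $E$ with $E_{i,j} = e_{i-1}(v_1,\dots,\widehat{v_j},\dots,v_q)$. Then $\Lambda \cdot E = E \cdot \mathrm{diag}(v_1,\dots,v_q)$. -/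
open Finset Polynomial

lemma esymmOn_eq_zero {R : Type*} [CommRing R] {ι : Type*} [DecidableEq ι]
    {A : Finset ι} (v : ι → R) {k : ℕ} (h : A.card < k) : esymmOn A v k = 0 := by
  simp [esymmOn, Finset.powersetCard_eq_empty.2 h]

lemma esymmOn_insert {R : Type*} [CommRing R] {ι : Type*} [DecidableEq ι]
    {A : Finset ι} {j : ι} (hj : j ∉ A) (v : ι → R) (k : ℕ) :
    esymmOn (insert j A) v (k+1) = esymmOn A v (k+1) + v j * esymmOn A v k := by
  unfold esymmOn
  rw [Finset.powersetCard_succ_insert hj, Finset.sum_union, Finset.mul_sum,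
    Finset.sum_image]
  · congr 1
    refine Finset.sum_congr rfl fun s hs => ?_
    rw [Finset.mem_powersetCard] at hs
    rw [Finset.prod_insert (fun h => hj (hs.1 h))]
  · intro s hs t ht hst
    rw [Finset.mem_coe, Finset.mem_powersetCard] at hs ht
    have hsj : j ∉ s := fun h => hj (hs.1 h)
    have htj : j ∉ t := fun h => hj (ht.1 h)
    have := congrArg (·.erase j) hst
    simpa [Finset.erase_insert hsj, Finset.erase_insert htj] using this
  · rw [Finset.disjoint_left]
    intro s hs hs'
    rw [Finset.mem_powersetCard] at hs
    obtain ⟨t, ht, rfl⟩ := Finset.mem_image.1 hs'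
    exact hj (hs.1 (Finset.mem_insert_self j t))

lemma key_s2 {R : Type*} [CommRing R] {q : ℕ} (v : Fin q → R) (j : Fin q) (k : ℕ) :
    esymmOn Finset.univ v (k+1)
      = esymmOn (Finset.univ.erase j) v (k+1) + v j * esymmOn (Finset.univ.erase j) v k := by
  have := esymmOn_insert (Finset.notMem_erase j Finset.univ) v k
  rwa [Finset.insert_erase (Finset.mem_univ j)] at this

theorem lambda_mul_E_eq_E_mul_diag {R : Type*} [CommRing R] (q : ℕ) (v : Fin q → R) :
    lambdaMatrix q (fun k => esymmOn Finset.univ v k)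
        * (Matrix.of fun i j : Fin q => esymmOn (Finset.univ.erase j) v (i : ℕ))
      = (Matrix.of fun i j : Fin q => esymmOn (Finset.univ.erase j) v (i : ℕ))
          * Matrix.diagonal v := by
  ext i j
  rw [Matrix.mul_apply, Matrix.mul_diagonal]
  simp only [Matrix.of_apply, lambdaMatrix]
  have hcard : (Finset.univ.erase j).card = q - 1 := by
    rw [Finset.card_erase_of_mem (Finset.mem_univ j), Finset.card_univ, Fintype.card_fin]
  have hq : 0 < q := i.pos
  set z : Fin q := ⟨0, hq⟩ with hz
  by_cases h : (i : ℕ) + 1 < q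
  · have hne : z ≠ (⟨(i : ℕ) + 1, h⟩ : Fin q) := by
      intro hh
      simpa [hz] using congrArg Fin.val hh
    have hsplit : ∀ k : Fin q,
        (if (k : ℕ) = 0 then esymmOn Finset.univ v ((i : ℕ) + 1)
          else if (k : ℕ) = (i : ℕ) + 1 then (-1 : R) else 0)
          * esymmOn (Finset.univ.erase j) v (k : ℕ)
        = (if k = z then esymmOn Finset.univ v ((i : ℕ) + 1)
              * esymmOn (Finset.univ.erase j) v 0 else 0)
          + (if k = (⟨(i : ℕ) + 1, h⟩ : Fin q) then
              -esymmOn (Finset.univ.erase j) v ((i : ℕ) + 1) else 0) := by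
      intro k
      rcases eq_or_ne k z with rfl | hk0
      · simp [hne, hz]
      · rcases eq_or_ne k (⟨(i : ℕ) + 1, h⟩ : Fin q) with rfl | hk1
        · have : ((⟨(i : ℕ) + 1, h⟩ : Fin q) : ℕ) = (i : ℕ) + 1 := rfl
          simp [hne.symm, this]
        · have h0 : (k : ℕ) ≠ 0 := fun hh => hk0 (Fin.ext hh)
          have h1 : (k : ℕ) ≠ (i : ℕ) + 1 := fun hh => hk1 (Fin.ext hh)
          simp [h0, h1, hk0, hk1]
    rw [Finset.sum_congr rfl fun k _ => hsplit k, Finset.sum_add_distrib,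
      Finset.sum_ite_eq' Finset.univ z, Finset.sum_ite_eq' Finset.univ]
    simp only [Finset.mem_univ, if_true]
    have e0 : esymmOn (Finset.univ.erase j) v 0 = 1 := by simp [esymmOn]
    rw [e0, mul_one, key_s2 v j (i : ℕ)]
    ring
  · have hiq : (i : ℕ) + 1 = q := by omega
    have hsplit : ∀ k : Fin q,
        (if (k : ℕ) = 0 then esymmOn Finset.univ v ((i : ℕ) + 1)
          else if (k : ℕ) = (i : ℕ) + 1 then (-1 : R) else 0)
          * esymmOn (Finset.univ.erase j) v (k : ℕ)
        = (if k = z then esymmOn Finset.univ v ((i : ℕ) + 1)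
              * esymmOn (Finset.univ.erase j) v 0 else 0) := by
      intro k
      rcases eq_or_ne k z with rfl | hk0
      · simp [hz]
      · have h0 : (k : ℕ) ≠ 0 := fun hh => hk0 (Fin.ext hh)
        have h1 : (k : ℕ) ≠ (i : ℕ) + 1 := by omega
        simp [h0, h1, hk0]
    rw [Finset.sum_congr rfl fun k _ => hsplit k,
      Finset.sum_ite_eq' Finset.univ z]
    simp only [Finset.mem_univ, if_true]
    have e0 : esymmOn (Finset.univ.erase j) v 0 = 1 := by simp [esymmOn]
    have ez : esymmOn (Finset.univ.erase j) v ((i : ℕ) + 1) = 0 :=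
      esymmOn_eq_zero v (by omega)
    rw [e0, mul_one, key_s2 v j (i : ℕ), ez]
    ring
end

section
/- Let $s, u_1,\dots,u_r, v_1,\dots,v_q$ be elements of a commutative ring. Let $\Lambda$ be the $q\times q$ matrix with $\Lambda_{i,1} = e_i(v_1,\dots,v_q)$, $\Lambda_{i,i+1} = -1$, and other entries zero, and let $I$ be the $q\times q$ identity matrix. Then $\prod_{i=1}^{r}\prod_{j=1}^{q}(s + u_i + v_j) = \det\left(\sum_{k=0}^{r} e_k(u_1,\dots,u_r)\,(sI + \Lambda)^{r-k}\right)$. -/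
open Finset Polynomial

lemma lambda_det {R : Type*} [CommRing R] (b : ℕ → R) :
    ∀ (q : ℕ) (t : R),
    (t • (1 : Matrix (Fin q) (Fin q) R) + lambdaMatrix q b).det
      = t ^ q + ∑ k ∈ Finset.range q, b (k + 1) * t ^ (q - 1 - k) := by
  intro q
  induction q with
  | zero => intro t; simp [Matrix.det_fin_zero]
  | succ q ih =>
    intro t
    set M : Matrix (Fin (q+1)) (Fin (q+1)) R :=
      t • (1 : Matrix (Fin (q+1)) (Fin (q+1)) R) + lambdaMatrix (q+1) b with hM
    have hentry : ∀ j : Fin (q+1), M (Fin.last q) j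
        = (if j = Fin.last q then t else 0) + (if (j:ℕ) = 0 then b (q+1) else 0) := by
      intro j
      have hlt : (j : ℕ) < q + 1 := j.isLt
      simp only [hM, Matrix.add_apply, Matrix.smul_apply, Matrix.one_apply, lambdaMatrix,
        Matrix.of_apply, smul_eq_mul, mul_ite, mul_one, mul_zero, Fin.val_last]
      have h2 : ¬ ((j:ℕ) = q + 1) := by omega
      by_cases hj0 : (j : ℕ) = 0
      · simp [hj0, h2, eq_comm]
      · simp [hj0, h2, eq_comm]
    have hdlast : M.submatrix (Fin.last q).succAbove (Fin.last q).succAbove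
        = t • (1 : Matrix (Fin q) (Fin q) R) + lambdaMatrix q b := by
      ext i j
      simp only [Matrix.submatrix_apply, Fin.succAbove_last, hM, Matrix.add_apply,
        Matrix.smul_apply, Matrix.one_apply, lambdaMatrix, Matrix.of_apply,
        Fin.coe_castSucc, Fin.castSucc_inj, smul_eq_mul]
    have hd0 : (M.submatrix (Fin.last q).succAbove (0 : Fin (q+1)).succAbove).det
        = (-1 : R) ^ q := by
      have hlow : (M.submatrix (Fin.last q).succAbove (0 : Fin (q+1)).succAbove).BlockTriangular
          OrderDual.toDual := by
        intro i j hij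
        simp only [OrderDual.toDual_lt_toDual] at hij
        simp only [Matrix.submatrix_apply, Fin.succAbove_last, Fin.succAbove_zero, hM,
          Matrix.add_apply, Matrix.smul_apply, Matrix.one_apply, lambdaMatrix, Matrix.of_apply,
          Fin.coe_castSucc, Fin.val_succ, smul_eq_mul]
        have h1 : ¬ (i.castSucc = j.succ) := by
          intro h
          have := congrArg (Fin.val) h
          simp at this
          omega
        have h2 : ¬ ((j:ℕ) + 1 = 0) := by omega
        have h3 : ¬ ((j:ℕ) + 1 = (i:ℕ) + 1) := by omega
        have h4 : ¬ ((j:ℕ) = (i:ℕ)) := by omega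
        simp [h1, h2, h3, h4]
      rw [Matrix.det_of_lowerTriangular _ hlow]
      have : ∀ i : Fin q, (M.submatrix (Fin.last q).succAbove (0 : Fin (q+1)).succAbove) i i
          = -1 := by
        intro i
        simp only [Matrix.submatrix_apply, Fin.succAbove_last, Fin.succAbove_zero, hM,
          Matrix.add_apply, Matrix.smul_apply, Matrix.one_apply, lambdaMatrix, Matrix.of_apply,
          Fin.coe_castSucc, Fin.val_succ, smul_eq_mul]
        have h1 : ¬ (i.castSucc = i.succ) := by
          intro h
          have := congrArg (Fin.val) h
          simp at this
        simp [h1]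
      rw [Finset.prod_congr rfl (fun i _ => this i), Finset.prod_const]
      simp
    rw [Matrix.det_succ_row M (Fin.last q)]
    have hsplit : ∀ j : Fin (q+1),
        (-1 : R) ^ ((Fin.last q : ℕ) + (j:ℕ)) * M (Fin.last q) j
          * (M.submatrix (Fin.last q).succAbove j.succAbove).det
        = (if j = Fin.last q then
            (-1:R) ^ (q + (j:ℕ)) * t * (M.submatrix (Fin.last q).succAbove j.succAbove).det
           else 0)
          + (if j = 0 then
            (-1:R) ^ (q + (j:ℕ)) * b (q+1) * (M.submatrix (Fin.last q).succAbove j.succAbove).det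
           else 0) := by
      intro j
      rw [hentry j]
      have : ((Fin.last q : Fin (q+1)) : ℕ) = q := rfl
      rw [this]
      have hv0 : ((j:ℕ) = 0) ↔ (j = 0) := by
        constructor
        · intro h; exact Fin.ext h
        · intro h; simp [h]
      by_cases h1 : j = Fin.last q <;> by_cases h2 : j = 0 <;>
        simp [h1, h2, hv0] <;> split_ifs <;> ring
    rw [Finset.sum_congr rfl (fun j _ => hsplit j), Finset.sum_add_distrib,
      Finset.sum_ite_eq' Finset.univ (Fin.last q), Finset.sum_ite_eq' Finset.univ (0 : Fin (q+1))]
    simp only [Finset.mem_univ, if_true, hdlast, hd0, ih t, Fin.val_last, Fin.val_zero]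
    have hparity : (-1 : R) ^ (q + q) = 1 := by
      rw [← two_mul, pow_mul]; norm_num
    rw [hparity]
    have hpow : ∀ k ∈ Finset.range q, b (k+1) * t ^ (q - k)
        = t * (b (k+1) * t ^ (q - 1 - k)) := by
      intro k hk
      simp only [Finset.mem_range] at hk
      have : q - k = (q - 1 - k) + 1 := by omega
      rw [this, pow_succ]; ring
    have hexp : ∀ k ∈ Finset.range (q+1), b (k+1) * t ^ (q + 1 - 1 - k) = b (k+1) * t ^ (q - k) := by
      intro k hk; norm_num
    rw [Finset.sum_congr rfl hexp, Finset.sum_range_succ, Finset.sum_congr rfl hpow,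
      ← Finset.mul_sum, Nat.sub_self, pow_zero]
    have : (-1:R)^(q+0) * b (q+1) * (-1:R)^q = b (q+1) := by
      rw [add_zero, mul_comm, ← mul_assoc, ← pow_add, hparity, one_mul]
    rw [this]
    ring

lemma esymmOn_eq_esymm {R : Type*} [CommRing R] {ι : Type*} [DecidableEq ι]
    (A : Finset ι) (v : ι → R) (k : ℕ) :
    esymmOn A v k = (A.val.map v).esymm k := by
  rw [Finset.esymm_map_val]
  rfl

lemma esymmOn_zero {R : Type*} [CommRing R] {ι : Type*} [DecidableEq ι]
    (A : Finset ι) (v : ι → R) : esymmOn A v 0 = 1 := by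
  simp [esymmOn]

lemma vieta_eval {R : Type*} [CommRing R] (q : ℕ) (v : Fin q → R) (t : R) :
    (∏ j, (t + v j))
      = ∑ k ∈ Finset.range (q + 1), esymmOn Finset.univ v k * t ^ (q - k) := by
  have hv := Multiset.prod_X_add_C_eq_sum_esymm (Multiset.map v Finset.univ.val)
  have hcard : Multiset.card (Multiset.map v Finset.univ.val) = q := by simp
  rw [hcard] at hv
  have := congrArg (Polynomial.eval t) hv
  rw [Polynomial.eval_multiset_prod] at this
  simp only [Multiset.map_map, Function.comp, Polynomial.eval_add, Polynomial.eval_X,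
    Polynomial.eval_C, Polynomial.eval_finset_sum, Polynomial.eval_mul, Polynomial.eval_pow]
    at this
  rw [Finset.prod_eq_multiset_prod]
  rw [this]
  refine Finset.sum_congr rfl fun k _ => ?_
  rw [esymmOn_eq_esymm]

lemma lambda_det_prod {R : Type*} [CommRing R] (q : ℕ) (v : Fin q → R) (t : R) :
    (t • (1 : Matrix (Fin q) (Fin q) R)
        + lambdaMatrix q (fun m => esymmOn Finset.univ v m)).det
      = ∏ j, (t + v j) := by
  rw [lambda_det, vieta_eval, Finset.sum_range_succ']
  rw [esymmOn_zero, one_mul, Nat.sub_zero]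
  have : ∀ k ∈ Finset.range q,
      esymmOn Finset.univ v (k + 1) * t ^ (q - (k + 1))
        = esymmOn Finset.univ v (k + 1) * t ^ (q - 1 - k) := by
    intro k hk
    congr 2
    omega
  rw [Finset.sum_congr rfl this]
  ring

theorem prod_eq_det_sum_esymm_pow {R : Type*} [CommRing R] (r q : ℕ) (s : R)
    (u : Fin r → R) (v : Fin q → R) :
    (∏ i, ∏ j, (s + u i + v j))
      = (∑ k ∈ Finset.range (r + 1),
          esymmOn Finset.univ u k •
            (s • (1 : Matrix (Fin q) (Fin q) R)
              + lambdaMatrix q (fun m => esymmOn Finset.univ v m)) ^ (r - k)).det := by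
  classical
  set M : Matrix (Fin q) (Fin q) R :=
    s • (1 : Matrix (Fin q) (Fin q) R)
      + lambdaMatrix q (fun m => esymmOn Finset.univ v m) with hMdef
  set L : List R := List.ofFn u with hL
  have huniv : (Finset.univ.val.map u) = (↑L : Multiset R) := by
    rw [Fin.univ_def]; simp [hL, List.ofFn_eq_map]
  have hcard : Multiset.card (Finset.univ.val.map u) = r := by simp
  -- the polynomial identity (Vieta)
  have hP := Multiset.prod_X_add_C_eq_sum_esymm (Finset.univ.val.map u)
  rw [hcard] at hP
  -- apply aeval M to both sides of hP
  have haev := congrArg (Polynomial.aeval M) hP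
  -- RHS of haev is the matrix sum
  have hrhs : Polynomial.aeval M
      (∑ j ∈ Finset.range (r + 1), C ((Finset.univ.val.map u).esymm j) * X ^ (r - j))
      = ∑ k ∈ Finset.range (r + 1), esymmOn Finset.univ u k • M ^ (r - k) := by
    rw [map_sum]
    refine Finset.sum_congr rfl fun k _ => ?_
    rw [map_mul, Polynomial.aeval_C, map_pow, Polynomial.aeval_X,
      Algebra.algebraMap_eq_smul_one, smul_mul_assoc, one_mul, esymmOn_eq_esymm]
  -- LHS of haev is a list product
  have hlhs : Polynomial.aeval M ((Multiset.map (fun a => X + C a) (Finset.univ.val.map u)).prod)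
      = (L.map fun a => M + a • (1 : Matrix (Fin q) (Fin q) R)).prod := by
    rw [huniv, Multiset.map_coe, Multiset.prod_coe, map_list_prod, List.map_map]
    have : (⇑(Polynomial.aeval M) ∘ fun a => X + C a)
        = fun a : R => M + a • (1 : Matrix (Fin q) (Fin q) R) := by
      funext a
      simp only [Function.comp_apply, map_add, Polynomial.aeval_X, Polynomial.aeval_C,
        Algebra.algebraMap_eq_smul_one]
    rw [this]
  rw [← hrhs, ← haev, hlhs]
  -- push det through the list product
  have hdet : ((L.map fun a => M + a • (1 : Matrix (Fin q) (Fin q) R)).prod).det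
      = (L.map fun a => (M + a • (1 : Matrix (Fin q) (Fin q) R)).det).prod := by
    rw [← Matrix.coe_detMonoidHom, MonoidHom.map_list_prod, List.map_map]
    rfl
  rw [hdet]
  have hfac : ∀ a : R, (M + a • (1 : Matrix (Fin q) (Fin q) R)).det = ∏ j, (s + a + v j) := by
    intro a
    have : M + a • (1 : Matrix (Fin q) (Fin q) R)
        = (s + a) • (1 : Matrix (Fin q) (Fin q) R)
          + lambdaMatrix q (fun m => esymmOn Finset.univ v m) := by
      rw [hMdef, add_smul]; abel
    rw [this, lambda_det_prod]
  have : (L.map fun a => (M + a • (1 : Matrix (Fin q) (Fin q) R)).det)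
      = L.map fun a => ∏ j, (s + a + v j) := by
    simp only [hfac]
  rw [this, hL, List.map_ofFn, List.prod_ofFn]
  rfl
end

section
/- Let $A(t) = \sum_{k=0}^{r} a_k t^{r-k}$ and $B(t) = \sum_{\ell=0}^{q} b_\ell t^{q-\ell}$ be polynomials over a commutative ring with $b_0 = 1$ (i.e., $B$ monic of degree $q$). Let $\Lambda(b)$ be the $q\times q$ matrix with first column entries $b_1,\dots,b_q$, entries $-1$ directly above the diagonal, and zeros elsewhere. Then $\mathrm{res}(A, B) = \det\left(\sum_{k=0}^{r}(-1)^k a_k\, \Lambda(b)^{r-k}\right)$. -/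
open Finset Polynomial

section Aux
variable {R : Type*} [CommRing R]

/-- The standard sum-form polynomial. -/
noncomputable def Apoly (r : ℕ) (a : ℕ → R) : Polynomial R :=
  ∑ k ∈ Finset.range (r + 1), C (a k) * X ^ (r - k)

theorem Apoly_coeff (r : ℕ) (a : ℕ → R) (n : ℕ) :
    (Apoly r a).coeff n = if n ≤ r then a (r - n) else 0 := by
  rw [Apoly, finset_sum_coeff]
  simp only [coeff_C_mul, coeff_X_pow]
  by_cases h : n ≤ r
  · rw [if_pos h, Finset.sum_eq_single (r - n)]
    · rw [if_pos (by omega), mul_one]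
    · intro k hk hne
      rw [if_neg (by simp only [Finset.mem_range] at hk; omega), mul_zero]
    · intro h'; exact absurd (Finset.mem_range.2 (by omega)) h'
  · rw [if_neg h]
    apply Finset.sum_eq_zero
    intro k hk
    rw [if_neg (by simp only [Finset.mem_range] at hk; omega), mul_zero]

theorem Apoly_natDegree_le (r : ℕ) (a : ℕ → R) : (Apoly r a).natDegree ≤ r := by
  apply natDegree_le_iff_degree_le.2
  apply (degree_sum_le _ _).trans
  apply Finset.sup_le
  intro k _
  exact (degree_C_mul_X_pow_le _ _).trans (by exact_mod_cast Nat.cast_le.2 (Nat.sub_le _ _))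

theorem Apoly_monic (q : ℕ) (b : ℕ → R) (hb : b 0 = 1) : (Apoly q b).Monic := by
  apply monic_of_natDegree_le_of_coeff_eq_one q (Apoly_natDegree_le q b)
  rw [Apoly_coeff, if_pos le_rfl, Nat.sub_self, hb]

theorem Apoly_natDegree [Nontrivial R] (q : ℕ) (b : ℕ → R) (hb : b 0 = 1) :
    (Apoly q b).natDegree = q := by
  refine le_antisymm (Apoly_natDegree_le q b) (le_natDegree_of_ne_zero ?_)
  rw [Apoly_coeff, if_pos le_rfl, Nat.sub_self, hb]
  exact one_ne_zero

theorem Apoly_degree [Nontrivial R] (q : ℕ) (b : ℕ → R) (hb : b 0 = 1) :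
    (Apoly q b).degree = (q : ℕ) := by
  rw [degree_eq_natDegree (Apoly_monic q b hb).ne_zero, Apoly_natDegree q b hb]

end Aux
section MatOf
variable {R : Type*} [CommRing R]

/-- Matrix of multiplication by `P` on `R[X]/(B)` in the basis `X^(q-1), …, X, 1`. -/
noncomputable def matOf (B : Polynomial R) (q : ℕ) (P : Polynomial R) :
    Matrix (Fin q) (Fin q) R :=
  Matrix.of fun i j => ((P * X ^ (q - 1 - (j : ℕ))) %ₘ B).coeff (q - 1 - (i : ℕ))

theorem modByMonicHom_eq (B p : Polynomial R) : modByMonicHom B p = p %ₘ B := rfl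

theorem matOf_smul (B : Polynomial R) (q : ℕ) (c : R) (P : Polynomial R) :
    matOf B q (C c * P) = c • matOf B q P := by
  ext i j
  simp only [matOf, Matrix.of_apply, Matrix.smul_apply, smul_eq_mul]
  rw [mul_assoc, ← smul_eq_C_mul, smul_modByMonic, coeff_smul, smul_eq_mul]

theorem matOf_sum {ι : Type*} (B : Polynomial R) (q : ℕ) (s : Finset ι) (f : ι → Polynomial R) :
    matOf B q (∑ k ∈ s, f k) = ∑ k ∈ s, matOf B q (f k) := by
  ext i j
  simp only [matOf, Matrix.of_apply, Matrix.sum_apply]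
  rw [Finset.sum_mul, ← finset_sum_coeff]
  congr 1
  exact map_sum (modByMonicHom B) (fun k => f k * X ^ (q - 1 - (j : ℕ))) s

theorem matOf_one [Nontrivial R] {B : Polynomial R} {q : ℕ} (hB : B.Monic)
    (hq : B.natDegree = q) : matOf B q 1 = 1 := by
  ext i j
  have hq0 : 0 < q := i.pos
  have hdeg : B.degree = (q : ℕ) := hq ▸ degree_eq_natDegree hB.ne_zero
  simp only [matOf, Matrix.of_apply, one_mul]
  rw [(modByMonic_eq_self_iff hB).2 (by
    rw [degree_X_pow, hdeg]
    exact_mod_cast (show q - 1 - (j : ℕ) < q by omega))]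
  rw [coeff_X_pow, Matrix.one_apply]
  have := i.isLt; have := j.isLt
  split_ifs with h1 h2 h2
  · rfl
  · exact absurd (Fin.ext (by omega : (i : ℕ) = (j : ℕ))) h2
  · exact absurd (by omega : (q - 1 - (i:ℕ)) = (q - 1 - (j:ℕ)))
      (by simpa using h1)
  · rfl

theorem matOf_mul [Nontrivial R] {B : Polynomial R} {q : ℕ} (hB : B.Monic)
    (hq : B.natDegree = q) (P Q : Polynomial R) :
    matOf B q (P * Q) = matOf B q P * matOf B q Q := by
  ext i j
  have hq0 : 0 < q := i.pos
  have hB1 : B ≠ 1 := by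
    intro h; rw [h, natDegree_one] at hq; omega
  set e := q - 1 - (j : ℕ) with he
  set S := (Q * X ^ e) %ₘ B with hS
  have hSdeg : S.natDegree < q := hq ▸ natDegree_modByMonic_lt _ hB hB1
  have h2 : Q * X ^ e - S = B * ((Q * X ^ e) /ₘ B) := by
    conv_lhs => rw [← modByMonic_add_div (Q * X ^ e) B]
    rw [← hS]; ring
  have h1 : (P * Q * X ^ e) %ₘ B = (P * S) %ₘ B := by
    apply modByMonic_eq_of_dvd_sub hB
    refine ⟨P * ((Q * X ^ e) /ₘ B), ?_⟩
    calc P * Q * X ^ e - P * S = P * (Q * X ^ e - S) := by ring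
    _ = B * (P * ((Q * X ^ e) /ₘ B)) := by rw [h2]; ring
  rw [Matrix.mul_apply]
  simp only [matOf, Matrix.of_apply]
  rw [h1]
  have hSsum : S = ∑ d ∈ Finset.range q, C (S.coeff d) * X ^ d := by
    conv_lhs => rw [S.as_sum_range' q hSdeg]
    exact Finset.sum_congr rfl fun d _ => (C_mul_X_pow_eq_monomial).symm
  have h3 : (P * S) %ₘ B = ∑ d ∈ Finset.range q, S.coeff d • ((P * X ^ d) %ₘ B) := by
    conv_lhs => rw [hSsum, Finset.mul_sum]
    have hterm : ∀ d : ℕ, P * (C (S.coeff d) * X ^ d) = S.coeff d • (P * X ^ d) := by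
      intro d; rw [smul_eq_C_mul]; ring
    simp_rw [hterm]
    calc (∑ d ∈ Finset.range q, S.coeff d • (P * X ^ d)) %ₘ B
        = modByMonicHom B (∑ d ∈ Finset.range q, S.coeff d • (P * X ^ d)) := rfl
      _ = ∑ d ∈ Finset.range q, S.coeff d • ((P * X ^ d) %ₘ B) := by
          rw [map_sum]
          exact Finset.sum_congr rfl fun d _ => (modByMonicHom B).map_smul _ _
  rw [h3, finset_sum_coeff]
  simp only [coeff_smul, smul_eq_mul]
  rw [Fin.sum_univ_eq_sum_range
    (fun l => ((P * X ^ (q - 1 - l)) %ₘ B).coeff (q - 1 - (i : ℕ)) * S.coeff (q - 1 - l)) q]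
  apply Finset.sum_nbij' (fun d => q - 1 - d) (fun l => q - 1 - l)
  · intro d hd; simp only [Finset.mem_range] at *; omega
  · intro l hl; simp only [Finset.mem_range] at *; omega
  · intro d hd; simp only [Finset.mem_range] at hd; omega
  · intro l hl; simp only [Finset.mem_range] at hl; omega
  · intro d hd
    simp only [Finset.mem_range] at hd
    have hd2 : q - 1 - (q - 1 - d) = d := by omega
    rw [hd2, mul_comm]

theorem matOf_pow [Nontrivial R] {B : Polynomial R} {q : ℕ} (hB : B.Monic)
    (hq : B.natDegree = q) (P : Polynomial R) (m : ℕ) :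
    matOf B q (P ^ m) = (matOf B q P) ^ m := by
  induction m with
  | zero => simpa using matOf_one hB hq
  | succ m ih => rw [pow_succ, pow_succ, matOf_mul hB hq, ih]

end MatOf
section NegX
variable {R : Type*} [CommRing R]

theorem matOf_neg_X [Nontrivial R] (q : ℕ) (b : ℕ → R) (hb : b 0 = 1) :
    matOf (Apoly q b) q (-X) = lambdaMatrix q b := by
  have hmB := Apoly_monic q b hb
  have hdB := Apoly_degree q b hb
  ext i j
  have hi := i.isLt
  have hj := j.isLt
  have hq0 : 0 < q := i.pos
  simp only [matOf, Matrix.of_apply, lambdaMatrix]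
  by_cases hj0 : (j : ℕ) = 0
  · rw [if_pos hj0, hj0]
    have hq1 : q - 1 - 0 + 1 = q := by omega
    have hX : (-X : Polynomial R) * X ^ (q - 1 - 0) = -(X ^ q) := by
      rw [neg_mul, ← pow_succ', hq1]
    rw [hX]
    have hsub : (-(X ^ q) : Polynomial R) = (Apoly q b - X ^ q) - Apoly q b := by ring
    have hdegsub : (Apoly q b - X ^ q).degree < (Apoly q b).degree := by
      rw [hdB]
      refine (degree_lt_iff_coeff_zero _ _).2 fun m hm => ?_
      rw [coeff_sub, Apoly_coeff, coeff_X_pow]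
      rcases eq_or_lt_of_le hm with h | h
      · rw [if_pos (le_of_eq h.symm), if_pos h.symm, ← h, Nat.sub_self, hb]; ring
      · rw [if_neg (by omega), if_neg (by omega)]; ring
    rw [hsub, sub_modByMonic, (show Apoly q b %ₘ Apoly q b = 0 by
        simpa using mul_self_modByMonic (p := (1:Polynomial R)) hmB), sub_zero,
      (modByMonic_eq_self_iff hmB).2 hdegsub]
    rw [coeff_sub, Apoly_coeff, coeff_X_pow, if_pos (by omega : q - 1 - (i:ℕ) ≤ q),
      if_neg (by omega : ¬ (q - 1 - (i:ℕ) = q))]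
    rw [sub_zero]
    congr 1
    omega
  · rw [if_neg hj0]
    have hj1 : 1 ≤ (j : ℕ) := by omega
    have hq1 : q - 1 - (j:ℕ) + 1 = q - (j:ℕ) := by omega
    have hX : (-X : Polynomial R) * X ^ (q - 1 - (j:ℕ)) = -(X ^ (q - (j:ℕ))) := by
      rw [neg_mul, ← pow_succ', hq1]
    rw [hX]
    have hdegX : (-(X ^ (q - (j:ℕ))) : Polynomial R).degree < (Apoly q b).degree := by
      rw [hdB, degree_neg, degree_X_pow]
      exact_mod_cast (show q - (j:ℕ) < q by omega)
    rw [(modByMonic_eq_self_iff hmB).2 hdegX, coeff_neg, coeff_X_pow]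
    by_cases hij : (j : ℕ) = (i : ℕ) + 1
    · rw [if_pos hij, if_pos (by omega : q - 1 - (i:ℕ) = q - (j:ℕ))]
    · rw [if_neg hij, if_neg (by omega : ¬ (q - 1 - (i:ℕ) = q - (j:ℕ))), neg_zero]

end NegX
section Syl
variable {R : Type*} [CommRing R]

theorem syl_entry_a (r q : ℕ) (a b : ℕ → R) (i j : Fin (r + q)) (hj : (j : ℕ) < q) :
    _root_.sylvester (Apoly r a) (Apoly q b) r q i j
      = (Apoly r a * X ^ (q - 1 - (j : ℕ))).coeff (r + q - 1 - (i : ℕ)) := by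
  have hi := i.isLt
  rw [coeff_mul_X_pow']
  simp only [_root_.sylvester, Matrix.of_apply, if_pos hj, Apoly_coeff]
  split_ifs <;> first | rfl | omega | (congr 1; omega)

theorem syl_entry_b (r q : ℕ) (a b : ℕ → R) (i j : Fin (r + q)) (hj : q ≤ (j : ℕ)) :
    _root_.sylvester (Apoly r a) (Apoly q b) r q i j
      = (Apoly q b * X ^ (r - 1 - ((j : ℕ) - q))).coeff (r + q - 1 - (i : ℕ)) := by
  have hi := i.isLt
  have hj2 := j.isLt
  rw [coeff_mul_X_pow']
  simp only [_root_.sylvester, Matrix.of_apply, if_neg (not_lt.2 hj), Apoly_coeff]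
  split_ifs <;> first | rfl | omega | (congr 1; omega)

/-- Quotient polynomials used for the column reduction. -/
noncomputable def Qpoly (r q : ℕ) (a b : ℕ → R) (j : ℕ) : Polynomial R :=
  (Apoly r a * X ^ (q - 1 - j)) /ₘ Apoly q b

/-- The unimodular column-operation matrix. -/
noncomputable def Umat (r q : ℕ) (a b : ℕ → R) : Matrix (Fin (r + q)) (Fin (r + q)) R :=
  Matrix.of fun i j =>
    if (j : ℕ) < q then
      (if (i : ℕ) = (j : ℕ) then 1
       else if q ≤ (i : ℕ) then -((Qpoly r q a b (j : ℕ)).coeff (r - 1 - ((i : ℕ) - q))) else 0)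
    else (if (i : ℕ) = (j : ℕ) then 1 else 0)

/-- The reduced Sylvester matrix. -/
noncomputable def Wmat (r q : ℕ) (a b : ℕ → R) : Matrix (Fin (r + q)) (Fin (r + q)) R :=
  Matrix.of fun i j =>
    if (j : ℕ) < q then
      ((Apoly r a * X ^ (q - 1 - (j : ℕ))) %ₘ Apoly q b).coeff (r + q - 1 - (i : ℕ))
    else _root_.sylvester (Apoly r a) (Apoly q b) r q i j

theorem gval_l (r q : ℕ) (x : Fin q) :
    (((finSumFinEquiv.trans (finCongr (Nat.add_comm q r))) (Sum.inl x) : Fin (r + q)) : ℕ)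
      = (x : ℕ) := by
  simp

theorem gval_r (r q : ℕ) (m : Fin r) :
    (((finSumFinEquiv.trans (finCongr (Nat.add_comm q r))) (Sum.inr m) : Fin (r + q)) : ℕ)
      = q + (m : ℕ) := by
  simp [Nat.add_comm]

theorem det_Umat (r q : ℕ) (a b : ℕ → R) : (Umat r q a b).det = 1 := by
  set g := (finSumFinEquiv.trans (finCongr (Nat.add_comm q r))) with hgdef
  have gl : ∀ x : Fin q, ((g (Sum.inl x)) : ℕ) = (x : ℕ) := fun x => by
    rw [hgdef]; exact gval_l r q x
  have gr : ∀ m : Fin r, ((g (Sum.inr m)) : ℕ) = q + (m : ℕ) := fun m => by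
    rw [hgdef]; exact gval_r r q m
  have hblocks : (Umat r q a b).submatrix g g
      = Matrix.fromBlocks 1 0
          (Matrix.of fun m x => (Umat r q a b) (g (Sum.inr m)) (g (Sum.inl x))) 1 := by
    ext x y
    cases x with
    | inl x =>
      cases y with
      | inl y =>
        simp only [Matrix.submatrix_apply, Matrix.fromBlocks_apply₁₁, Umat, Matrix.of_apply,
          gl, Matrix.one_apply]
        rw [if_pos y.isLt]
        by_cases h : (x : ℕ) = (y : ℕ)
        · rw [if_pos h, if_pos (Fin.ext h)]
        · rw [if_neg h, if_neg (not_le.2 x.isLt), if_neg (fun hh => h (by rw [hh]))]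
      | inr y =>
        simp only [Matrix.submatrix_apply, Matrix.fromBlocks_apply₁₂, Umat, Matrix.of_apply,
          gl, gr, Matrix.zero_apply]
        rw [if_neg (by omega), if_neg (by have := x.isLt; omega)]
    | inr x =>
      cases y with
      | inl y => rfl
      | inr y =>
        simp only [Matrix.submatrix_apply, Matrix.fromBlocks_apply₂₂, Umat, Matrix.of_apply,
          gr, Matrix.one_apply]
        rw [if_neg (by omega)]
        by_cases h : (x : ℕ) = (y : ℕ)
        · rw [if_pos (by omega), if_pos (Fin.ext h)]
        · rw [if_neg (by omega), if_neg (fun hh => h (by rw [hh]))]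
  have hdet := Matrix.det_submatrix_equiv_self g (Umat r q a b)
  rw [← hdet, hblocks, Matrix.det_fromBlocks_zero₁₂, Matrix.det_one, Matrix.det_one, mul_one]

end Syl
section Mul
variable {R : Type*} [CommRing R]

theorem coeff_B_mul_Qpoly [Nontrivial R] (r q : ℕ) (a b : ℕ → R) (hb : b 0 = 1)
    (j : ℕ) (hj : j < q) (n : ℕ) :
    (Apoly q b * Qpoly r q a b j).coeff n
      = ∑ m ∈ Finset.range r,
          (Apoly q b * X ^ (r - 1 - m)).coeff n * (Qpoly r q a b j).coeff (r - 1 - m) := by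
  have hmB := Apoly_monic q b hb
  have hdB := Apoly_degree q b hb
  have hnB := Apoly_natDegree q b hb
  rcases Nat.eq_zero_or_pos r with hr | hr
  · subst hr
    have hQ0 : Qpoly 0 q a b j = 0 := by
      rw [Qpoly, divByMonic_eq_zero_iff hmB, hdB]
      calc (Apoly 0 a * X ^ (q - 1 - j)).degree
          ≤ (Apoly 0 a).degree + (X ^ (q - 1 - j) : Polynomial R).degree := degree_mul_le _ _
        _ ≤ (0 : ℕ) + ((q - 1 - j : ℕ) : WithBot ℕ) := by
            apply add_le_add
            · exact natDegree_le_iff_degree_le.1 (Apoly_natDegree_le 0 a)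
            · rw [degree_X_pow]
        _ < (q : ℕ) := by
            rw [← Nat.cast_add]
            exact_mod_cast (show 0 + (q - 1 - j) < q by omega)
    simp [hQ0]
  · have hQdeg : (Qpoly r q a b j).natDegree < r := by
      rw [Qpoly, natDegree_divByMonic _ hmB, hnB]
      have hAX : (Apoly r a * X ^ (q - 1 - j)).natDegree ≤ r + (q - 1 - j) := by
        apply natDegree_mul_le.trans
        rw [natDegree_X_pow]
        exact Nat.add_le_add_right (Apoly_natDegree_le r a) _
      omega
    have hQ : Qpoly r q a b j
        = ∑ d ∈ Finset.range r, C ((Qpoly r q a b j).coeff d) * X ^ d := by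
      conv_lhs => rw [(Qpoly r q a b j).as_sum_range' r hQdeg]
      exact Finset.sum_congr rfl fun d _ => (C_mul_X_pow_eq_monomial).symm
    conv_lhs => rw [hQ, Finset.mul_sum]
    rw [finset_sum_coeff]
    apply Finset.sum_nbij' (fun d => r - 1 - d) (fun m => r - 1 - m)
    · intro d hd; simp only [Finset.mem_range] at *; omega
    · intro m hm; simp only [Finset.mem_range] at *; omega
    · intro d hd; simp only [Finset.mem_range] at hd; omega
    · intro m hm; simp only [Finset.mem_range] at hm; omega
    · intro d hd
      simp only [Finset.mem_range] at hd
      have hd2 : r - 1 - (r - 1 - d) = d := by omega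
      rw [hd2]
      rw [show Apoly q b * (C ((Qpoly r q a b j).coeff d) * X ^ d)
            = C ((Qpoly r q a b j).coeff d) * (Apoly q b * X ^ d) by ring]
      rw [coeff_C_mul, mul_comm]

theorem syl_mul_Umat [Nontrivial R] (r q : ℕ) (a b : ℕ → R) (hb : b 0 = 1) :
    _root_.sylvester (Apoly r a) (Apoly q b) r q * Umat r q a b = Wmat r q a b := by
  have hmB := Apoly_monic q b hb
  ext i j
  rw [Matrix.mul_apply]
  by_cases hj : (j : ℕ) < q
  · set g := (finSumFinEquiv.trans (finCongr (Nat.add_comm q r))) with hgdef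
    have gl : ∀ x : Fin q, ((g (Sum.inl x)) : ℕ) = (x : ℕ) := fun x => by
      rw [hgdef]; exact gval_l r q x
    have gr : ∀ m : Fin r, ((g (Sum.inr m)) : ℕ) = q + (m : ℕ) := fun m => by
      rw [hgdef]; exact gval_r r q m
    rw [← Equiv.sum_comp g
      (fun k => _root_.sylvester (Apoly r a) (Apoly q b) r q i k * Umat r q a b k j)]
    rw [Fintype.sum_sum_type]
    have h1 : (∑ x : Fin q,
        _root_.sylvester (Apoly r a) (Apoly q b) r q i (g (Sum.inl x)) * Umat r q a b (g (Sum.inl x)) j)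
        = _root_.sylvester (Apoly r a) (Apoly q b) r q i j := by
      have hU : ∀ x : Fin q,
          Umat r q a b (g (Sum.inl x)) j = if (x : ℕ) = (j : ℕ) then 1 else 0 := by
        intro x
        simp only [Umat, Matrix.of_apply, gl, if_pos hj]
        by_cases h : (x : ℕ) = (j : ℕ)
        · rw [if_pos h, if_pos h]
        · rw [if_neg h, if_neg (not_le.2 x.isLt), if_neg h]
      simp only [hU, mul_ite, mul_one, mul_zero]
      rw [Finset.sum_eq_single (⟨(j : ℕ), hj⟩ : Fin q)]
      · rw [if_pos rfl]
        have hgj : g (Sum.inl (⟨(j : ℕ), hj⟩ : Fin q)) = j := Fin.ext (by rw [gl])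
        rw [hgj]
      · intro x _ hx
        rw [if_neg (fun hh => hx (Fin.ext hh))]
      · intro h; exact absurd (Finset.mem_univ _) h
    have h2 : (∑ m : Fin r,
        _root_.sylvester (Apoly r a) (Apoly q b) r q i (g (Sum.inr m)) * Umat r q a b (g (Sum.inr m)) j)
        = -(Apoly q b * Qpoly r q a b (j : ℕ)).coeff (r + q - 1 - (i : ℕ)) := by
      have hU : ∀ m : Fin r, Umat r q a b (g (Sum.inr m)) j
          = -((Qpoly r q a b (j : ℕ)).coeff (r - 1 - (m : ℕ))) := by
        intro m
        simp only [Umat, Matrix.of_apply, gr, if_pos hj]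
        rw [if_neg (by omega), if_pos (by omega)]
        congr 2
        omega
      have hS : ∀ m : Fin r, _root_.sylvester (Apoly r a) (Apoly q b) r q i (g (Sum.inr m))
          = (Apoly q b * X ^ (r - 1 - (m : ℕ))).coeff (r + q - 1 - (i : ℕ)) := by
        intro m
        have hv : ((g (Sum.inr m)) : ℕ) - q = (m : ℕ) := by rw [gr]; omega
        rw [syl_entry_b r q a b i (g (Sum.inr m)) (by rw [gr]; omega), hv]
      simp only [hU, hS, mul_neg]
      rw [Finset.sum_neg_distrib]
      congr 1
      rw [coeff_B_mul_Qpoly r q a b hb (j : ℕ) hj]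
      exact Fin.sum_univ_eq_sum_range (fun m =>
        (Apoly q b * X ^ (r - 1 - m)).coeff (r + q - 1 - (i : ℕ))
          * (Qpoly r q a b (j : ℕ)).coeff (r - 1 - m)) r
    rw [h1, h2, syl_entry_a r q a b i j hj]
    simp only [Wmat, Matrix.of_apply, if_pos hj]
    rw [modByMonic_eq_sub_mul_div _ (Apoly q b), coeff_sub, Qpoly]
    ring
  · have hcol : ∀ k : Fin (r + q), Umat r q a b k j = if k = j then 1 else 0 := by
      intro k
      simp only [Umat, Matrix.of_apply, if_neg hj]
      by_cases h : (k : ℕ) = (j : ℕ)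
      · rw [if_pos h, if_pos (Fin.ext h)]
      · rw [if_neg h, if_neg (fun hh => h (by rw [hh]))]
    simp only [hcol, mul_ite, mul_one, mul_zero]
    rw [Finset.sum_ite_eq' Finset.univ j
      (fun k => _root_.sylvester (Apoly r a) (Apoly q b) r q i k)]
    rw [if_pos (Finset.mem_univ _)]
    simp only [Wmat, Matrix.of_apply, if_neg hj]

end Mul
section DetW
variable {R : Type*} [CommRing R]

theorem finRotate_pow_val {N : ℕ} (m : ℕ) (x : Fin N) :
    ((((finRotate N) ^ m) x) : ℕ) = ((x : ℕ) + m) % N := by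
  cases N with
  | zero => exact x.elim0
  | succ n =>
    induction m with
    | zero => simp [Nat.mod_eq_of_lt x.isLt]
    | succ m ih =>
      rw [pow_succ']
      rw [show ((finRotate (n+1)) * ((finRotate (n+1))^m)) x
          = finRotate (n+1) (((finRotate (n+1))^m) x) from rfl]
      rw [finRotate_succ_apply, Fin.val_add, ih, Fin.val_one']
      conv_rhs => rw [show (x:ℕ) + (m+1) = ((x:ℕ) + m) + 1 by omega, Nat.add_mod]

theorem det_Wmat [Nontrivial R] (r q : ℕ) (a b : ℕ → R) (hb : b 0 = 1) (n : ℕ)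
    (hn : r + q = n + 1) :
    (Wmat r q a b).det
      = (-1 : R) ^ (n * q) * (matOf (Apoly q b) q (Apoly r a)).det := by
  have hmB := Apoly_monic q b hb
  have hdB := Apoly_degree q b hb
  set e := (finSumFinEquiv : Fin r ⊕ Fin q ≃ Fin (r + q)) with hedef
  set f := ((Equiv.sumComm (Fin r) (Fin q)).trans
    (finSumFinEquiv.trans (finCongr (Nat.add_comm q r)))) with hfdef
  have el : ∀ i : Fin r, ((e (Sum.inl i)) : ℕ) = (i : ℕ) := fun i => by
    rw [hedef]; simp
  have er : ∀ i : Fin q, ((e (Sum.inr i)) : ℕ) = r + (i : ℕ) := fun i => by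
    rw [hedef]; simp
  have fl : ∀ m : Fin r, ((f (Sum.inl m)) : ℕ) = q + (m : ℕ) := fun m => by
    rw [hfdef]; simp [Nat.add_comm]
  have fr : ∀ j : Fin q, ((f (Sum.inr j)) : ℕ) = (j : ℕ) := fun j => by
    rw [hfdef]; simp
  have hblocks : (Wmat r q a b).submatrix e f
      = Matrix.fromBlocks
          (Matrix.of fun i m => Wmat r q a b (e (Sum.inl i)) (f (Sum.inl m)))
          0
          (Matrix.of fun i m => Wmat r q a b (e (Sum.inr i)) (f (Sum.inl m)))
          (matOf (Apoly q b) q (Apoly r a)) := by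
    ext x y
    cases x with
    | inl x =>
      cases y with
      | inl y => rfl
      | inr y =>
        simp only [Matrix.submatrix_apply, Matrix.fromBlocks_apply₁₂, Matrix.zero_apply]
        simp only [Wmat, Matrix.of_apply]
        rw [if_pos (by rw [fr]; exact y.isLt)]
        apply coeff_eq_zero_of_degree_lt
        apply lt_of_lt_of_le (degree_modByMonic_lt _ hmB)
        rw [hdB]
        have hx := x.isLt
        have hge : q ≤ r + q - 1 - ((e (Sum.inl x)) : ℕ) := by rw [el]; omega
        exact_mod_cast Nat.cast_le.2 hge
    | inr x =>
      cases y with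
      | inl y => rfl
      | inr y =>
        simp only [Matrix.submatrix_apply, Matrix.fromBlocks_apply₂₂]
        simp only [Wmat, Matrix.of_apply, matOf]
        rw [if_pos (by rw [fr]; exact y.isLt)]
        rw [er, fr]
        have hx := x.isLt
        rw [show r + q - 1 - (r + (x : ℕ)) = q - 1 - (x : ℕ) by omega]
  have hdet1 : ((Wmat r q a b).submatrix e f).det
      = (Matrix.of fun i m => Wmat r q a b (e (Sum.inl i)) (f (Sum.inl m))).det
        * (matOf (Apoly q b) q (Apoly r a)).det := by
    rw [hblocks, Matrix.det_fromBlocks_zero₁₂]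
  have hT : (Matrix.of fun (i m : Fin r) => Wmat r q a b (e (Sum.inl i)) (f (Sum.inl m))).det
      = 1 := by
    rw [Matrix.det_of_lowerTriangular]
    · apply Finset.prod_eq_one
      intro i _
      simp only [Matrix.of_apply]
      rw [show Wmat r q a b (e (Sum.inl i)) (f (Sum.inl i))
          = _root_.sylvester (Apoly r a) (Apoly q b) r q (e (Sum.inl i)) (f (Sum.inl i)) by
        simp only [Wmat, Matrix.of_apply]
        rw [if_neg (by rw [fl]; omega)]]
      rw [syl_entry_b r q a b _ _ (by rw [fl]; omega), coeff_mul_X_pow', el, fl]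
      have hi := i.isLt
      rw [if_pos (by omega),
        show r + q - 1 - (i:ℕ) - (r - 1 - (q + (i:ℕ) - q)) = q by omega]
      rw [Apoly_coeff, if_pos le_rfl, Nat.sub_self, hb]
    · intro i j hij
      have hij' : i < j := by simpa using hij
      have hij'' : (i : ℕ) < (j : ℕ) := hij'
      simp only [Matrix.of_apply]
      rw [show Wmat r q a b (e (Sum.inl i)) (f (Sum.inl j))
          = _root_.sylvester (Apoly r a) (Apoly q b) r q (e (Sum.inl i)) (f (Sum.inl j)) by
        simp only [Wmat, Matrix.of_apply]
        rw [if_neg (by rw [fl]; omega)]]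
      rw [syl_entry_b r q a b _ _ (by rw [fl]; omega), coeff_mul_X_pow', el, fl]
      have hi := i.isLt
      have hj := j.isLt
      by_cases hc : r - 1 - (q + (j:ℕ) - q) ≤ r + q - 1 - (i:ℕ)
      · rw [if_pos hc, Apoly_coeff, if_neg (by omega)]
      · rw [if_neg hc]
  set π : Equiv.Perm (Fin (r + q)) := e.symm.trans f with hπdef
  have hcomp : (Wmat r q a b).submatrix e f = ((Wmat r q a b).submatrix id ⇑π).submatrix e e := by
    ext x y
    simp [hπdef, Matrix.submatrix_apply, Equiv.symm_apply_apply]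
  have hdet2 : ((Wmat r q a b).submatrix e f).det
      = ((Equiv.Perm.sign π : ℤ) : R) * (Wmat r q a b).det := by
    rw [hcomp, Matrix.det_submatrix_equiv_self, Matrix.det_permute']
  have hrot : π = (finRotate (r + q)) ^ q := by
    apply Equiv.ext
    intro z
    obtain ⟨y, rfl⟩ := e.surjective z
    apply Fin.ext
    rw [finRotate_pow_val]
    rw [show π (e y) = f y by simp [hπdef, Equiv.symm_apply_apply]]
    cases y with
    | inl i =>
      rw [fl, el]
      have := i.isLt
      rw [Nat.mod_eq_of_lt (by omega)]
      omega
    | inr j =>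
      rw [fr, er]
      have := j.isLt
      rw [show r + (j : ℕ) + q = (j : ℕ) + (r + q) by omega, Nat.add_mod_right,
        Nat.mod_eq_of_lt (by omega)]
  have hsign : ((Equiv.Perm.sign π : ℤ) : R) = (-1 : R) ^ (n * q) := by
    rw [hrot, map_pow, hn, sign_finRotate]
    push_cast
    rw [← pow_mul]
  have hkey : ((Equiv.Perm.sign π : ℤ) : R) * (Wmat r q a b).det
      = (matOf (Apoly q b) q (Apoly r a)).det := by
    rw [← hdet2, hdet1, hT, one_mul]
  rw [hsign] at hkey
  have hs2 : (-1 : R) ^ (n * q) * (-1 : R) ^ (n * q) = 1 := by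
    rw [← pow_add]
    exact Even.neg_one_pow ⟨n * q, rfl⟩
  calc (Wmat r q a b).det = (-1 : R) ^ (n * q) * ((-1 : R) ^ (n * q) * (Wmat r q a b).det) := by
        rw [← mul_assoc, hs2, one_mul]
    _ = (-1 : R) ^ (n * q) * (matOf (Apoly q b) q (Apoly r a)).det := by rw [hkey]

end DetW

theorem resultant_monic_det_formula {R : Type*} [CommRing R] (r q : ℕ)
    (a b : ℕ → R) (hb : b 0 = 1) :
    resultant' (∑ k ∈ Finset.range (r + 1), C (a k) * X ^ (r - k))
        (∑ k ∈ Finset.range (q + 1), C (b k) * X ^ (q - k)) r q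
      = (∑ k ∈ Finset.range (r + 1),
          ((-1 : R) ^ k * a k) • (lambdaMatrix q b) ^ (r - k)).det := by
  nontriviality R
  show (_root_.sylvester (Apoly r a) (Apoly q b) r q).det = _
  rcases Nat.eq_zero_or_pos (r + q) with h0 | hpos
  · have hr0 : r = 0 := by omega
    have hq0 : q = 0 := by omega
    subst hr0; subst hq0
    simp [Matrix.det_isEmpty]
  · obtain ⟨n, hn⟩ : ∃ n, r + q = n + 1 := ⟨r + q - 1, by omega⟩
    have hmB := Apoly_monic q b hb
    have hnB := Apoly_natDegree q b hb
    have hpoly : (∑ k ∈ Finset.range (r + 1), C ((-1 : R) ^ k * a k) * (-X) ^ (r - k))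
        = C ((-1 : R) ^ r) * Apoly r a := by
      rw [Apoly, Finset.mul_sum]
      refine Finset.sum_congr rfl fun k hk => ?_
      have hk' : k ≤ r := by simp only [Finset.mem_range] at hk; omega
      have e1 : (C ((-1 : R) ^ k) : Polynomial R) = (-1) ^ k := by
        rw [map_pow, map_neg, map_one]
      have e2 : (C ((-1 : R) ^ r) : Polynomial R) = (-1) ^ r := by
        rw [map_pow, map_neg, map_one]
      rw [map_mul, e1, e2]
      rw [show ((-X : Polynomial R)) ^ (r - k) = (-1) ^ (r - k) * X ^ (r - k) by
        rw [neg_pow]]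
      rw [show ((-1 : Polynomial R) ^ k * C (a k)) * ((-1) ^ (r - k) * X ^ (r - k))
          = ((-1 : Polynomial R) ^ k * (-1) ^ (r - k)) * (C (a k) * X ^ (r - k)) by ring]
      rw [← pow_add, show k + (r - k) = r by omega]
    have hRHS : (∑ k ∈ Finset.range (r + 1), ((-1 : R) ^ k * a k) • lambdaMatrix q b ^ (r - k))
        = matOf (Apoly q b) q (C ((-1 : R) ^ r) * Apoly r a) := by
      calc ∑ k ∈ Finset.range (r + 1), ((-1 : R) ^ k * a k) • lambdaMatrix q b ^ (r - k)
          = ∑ k ∈ Finset.range (r + 1),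
              matOf (Apoly q b) q (C ((-1 : R) ^ k * a k) * (-X) ^ (r - k)) := by
            refine Finset.sum_congr rfl fun k _ => ?_
            rw [show (lambdaMatrix q b) ^ (r - k)
                = matOf (Apoly q b) q ((-X) ^ (r - k)) by
              rw [matOf_pow hmB hnB, matOf_neg_X q b hb]]
            exact (matOf_smul _ _ _ _).symm
        _ = matOf (Apoly q b) q
              (∑ k ∈ Finset.range (r + 1), C ((-1 : R) ^ k * a k) * (-X) ^ (r - k)) :=
            (matOf_sum _ _ _ _).symm
        _ = matOf (Apoly q b) q (C ((-1 : R) ^ r) * Apoly r a) := by rw [hpoly]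
    rw [hRHS, matOf_smul, Matrix.det_smul, Fintype.card_fin]
    have hdetW : (_root_.sylvester (Apoly r a) (Apoly q b) r q).det = (Wmat r q a b).det := by
      rw [← syl_mul_Umat r q a b hb, Matrix.det_mul, det_Umat, mul_one]
    rw [hdetW, det_Wmat r q a b hb n hn]
    congr 1
    rw [← pow_mul]
    rcases Nat.eq_zero_or_pos q with hq0 | hq0
    · subst hq0; simp
    · have hnrq : n * q = r * q + (q - 1) * q := by
        have hn' : n = r + (q - 1) := by omega
        rw [hn', add_mul]
      rw [hnrq, pow_add]
      have heven : Even ((q - 1) * q) := by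
        have h := Nat.even_mul_succ_self (q - 1)
        rwa [show q - 1 + 1 = q by omega] at h
      rw [heven.neg_one_pow, mul_one]
end

section
/- Let $\alpha_1,\dots,\alpha_r$ be elements of a commutative $\mathbb{Q}$-algebra and $s$ another element. Define $\bar{d}_k = \sum_{i=0}^{k} \binom{r-i}{k-i} e_i(\alpha_1,\dots,\alpha_r)(s/2)^{k-i}$ for $0 \le k \le r$, and $\bar{d}_k = 0$ for $k < 0$ or $k > r$. Then $\prod_{1\le i<j\le r}(s + \alpha_i + \alpha_j) = \det\big([\bar{d}_{2i-j}]_{i,j=1}^{r-1}\big)$. -/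
open Finset Polynomial

/-- The coefficient `d̄ₖ = dₖ(s/2) = ∑ᵢ C(r-i, k-i) eᵢ(α) (s/2)^(k-i)`, defined for
integer indices `k` with value `0` outside `0 ≤ k ≤ r`. -/
def dbar {R : Type*} [CommRing R] [Algebra ℚ R] (r : ℕ) (s : R) (α : Fin r → R)
    (k : ℤ) : R :=
  if 0 ≤ k ∧ k ≤ (r : ℤ) then
    ∑ i ∈ Finset.range (k.toNat + 1),
      ((r - i).choose (k.toNat - i) : R) * esymmOn Finset.univ α i *
        (((1 : ℚ) / 2) • s) ^ (k.toNat - i)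
  else 0

namespace PPaux

variable {R : Type*} [CommRing R] {S : Type*} [CommRing S]

/-- coefficients of `f`, read from the top degree `d`, with integer index and
zero outside `[0,d]`. -/
def cf (f : R[X]) (d : ℕ) (k : ℤ) : R :=
  if 0 ≤ k ∧ k ≤ (d : ℤ) then f.coeff (d - k.toNat) else 0

lemma cf_of_neg {f : R[X]} {d : ℕ} {k : ℤ} (h : k < 0) : cf f d k = 0 := by
  simp [cf]; omega

lemma cf_of_gt {f : R[X]} {d : ℕ} {k : ℤ} (h : (d : ℤ) < k) : cf f d k = 0 := by
  simp [cf]; omega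

lemma cf_mul_X_add_C {f : R[X]} {d : ℕ} (hf : f.natDegree ≤ d) (y : R) (k : ℤ) :
    cf (f * (X + C y)) (d + 1) k = cf f d k + y * cf f d (k - 1) := by
  have hco : ∀ m : ℕ, (f * (X + C y)).coeff m
      = (f * X).coeff m + y * f.coeff m := by
    intro m
    rw [mul_add, Polynomial.coeff_add, mul_comm f (C y), Polynomial.coeff_C_mul]
  unfold cf
  split_ifs with h1 h2 h3 h2 h3
  · -- 0 ≤ k ≤ d+1, 0 ≤ k ≤ d, 0 ≤ k-1 ≤ d
    rw [hco]
    have hk : 1 ≤ k.toNat ∧ k.toNat ≤ d := by omega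
    have h0 : (d + 1 - k.toNat) = (d - k.toNat) + 1 := by omega
    have h1' : (k - 1).toNat = k.toNat - 1 := by omega
    rw [h0, Polynomial.coeff_mul_X, h1']
    have he : d - k.toNat + 1 = d - (k.toNat - 1) := by omega
    rw [he]
  · -- 0 ≤ k ≤ d+1, 0 ≤ k ≤ d, ¬(0 ≤ k-1 ≤ d) : k = 0
    have hk : k = 0 := by omega
    subst hk
    rw [hco]
    simp only [Int.toNat_zero, Nat.sub_zero, mul_zero, add_zero]
    have : (f * X).coeff (d + 1) = f.coeff d := by
      rw [Polynomial.coeff_mul_X]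
    rw [this]
    have : f.coeff (d + 1) = 0 :=
      Polynomial.coeff_eq_zero_of_natDegree_lt (by omega)
    rw [this, mul_zero, add_zero]
  · -- 0 ≤ k ≤ d+1, ¬(0 ≤ k ≤ d), 0 ≤ k-1 ≤ d : k = d+1
    have hk : k = (d : ℤ) + 1 := by omega
    subst hk
    have h0 : ((d : ℤ) + 1).toNat = d + 1 := by omega
    have h1' : ((d : ℤ) + 1 - 1).toNat = d := by omega
    rw [hco, h0, h1']
    simp
  · -- k = d+1 and also ¬(0 ≤ k-1 ≤ d) : impossible unless d+1... k-1 = d ≥ 0 always. contradiction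
    omega
  · omega
  · omega
  · omega
  · simp

lemma cf_mul_X_sq_sub {f : R[X]} {d : ℕ} (hf : f.natDegree ≤ d) (y : R) (k : ℤ) :
    cf (f * (X ^ 2 - C (y ^ 2))) (d + 2) k = cf f d k - y ^ 2 * cf f d (k - 2) := by
  have hfac : f * (X ^ 2 - C (y ^ 2)) = f * (X + C y) * (X + C (-y)) := by
    rw [Polynomial.C_neg, map_pow]
    ring
  have h1 : (f * (X + C y)).natDegree ≤ d + 1 := by
    refine le_trans (Polynomial.natDegree_mul_le) ?_
    have : (X + C y).natDegree ≤ 1 := by compute_degree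
    omega
  rw [hfac, cf_mul_X_add_C h1 (-y) k, cf_mul_X_add_C hf y k,
    cf_mul_X_add_C hf y (k - 1)]
  have h2 : k - 1 - 1 = k - 2 := by ring
  rw [h2]
  ring


lemma natDegree_prod_X_add_C_le' {ι : Type*} (s : Finset ι) (x : ι → R) :
    (∏ i ∈ s, (X + C (x i))).natDegree ≤ #s := by
  have h1 : (∏ i ∈ s, (X + C (x i))).natDegree
      ≤ ∑ i ∈ s, (X + C (x i)).natDegree :=
    Polynomial.natDegree_prod_le s (fun i => X + C (x i))
  have h2 : ∑ i ∈ s, (X + C (x i)).natDegree ≤ ∑ _i ∈ s, 1 :=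
    Finset.sum_le_sum (fun i _ => by compute_degree)
  simpa using le_trans h1 h2

lemma natDegree_prod_X_add_C_le {n : ℕ} (x : Fin n → R) :
    (∏ i : Fin n, (X + C (x i))).natDegree ≤ n := by
  simpa using natDegree_prod_X_add_C_le' univ x

/-- integer-indexed elementary symmetric function -/
def Efun {n : ℕ} (x : Fin n → R) (k : ℤ) : R :=
  if 0 ≤ k ∧ k ≤ (n : ℤ) then esymmOn Finset.univ x k.toNat else 0

lemma E_eq_cf {n : ℕ} (x : Fin n → R) (k : ℤ) :
    Efun x k = cf (∏ i : Fin n, (X + C (x i))) n k := by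
  unfold Efun cf
  split_ifs with h
  · have hc : #(univ : Finset (Fin n)) = n := by simp
    have hle : n - k.toNat ≤ #(univ : Finset (Fin n)) := by omega
    rw [Finset.prod_X_add_C_coeff _ _ hle, hc]
    have : n - (n - k.toNat) = k.toNat := by omega
    rw [this]
    rfl
  · rfl

lemma E_map (φ : R →+* S) {n : ℕ} (x : Fin n → R) (k : ℤ) :
    Efun (fun i => φ (x i)) k = φ (Efun x k) := by
  unfold Efun esymmOn
  split_ifs with h
  · rw [map_sum]
    exact Finset.sum_congr rfl fun t _ => by rw [map_prod]
  · simp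

lemma E_snoc {n : ℕ} (x : Fin n → R) (y : R) (k : ℤ) :
    Efun (Fin.snoc x y) k = Efun x k + y * Efun x (k - 1) := by
  rw [E_eq_cf, E_eq_cf, E_eq_cf]
  have hp : (∏ i : Fin (n + 1), (X + C (Fin.snoc x y i)))
      = (∏ i : Fin n, (X + C (x i))) * (X + C y) := by
    rw [Fin.prod_univ_castSucc]
    simp
  rw [hp]
  exact cf_mul_X_add_C (natDegree_prod_X_add_C_le x) y k

lemma E_zero {n : ℕ} (x : Fin n → R) : Efun x 0 = 1 := by
  unfold Efun esymmOn
  simp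

lemma E_of_neg {n : ℕ} (x : Fin n → R) {k : ℤ} (h : k < 0) : Efun x k = 0 := by
  unfold Efun; simp; omega

lemma E_of_gt {n : ℕ} (x : Fin n → R) {k : ℤ} (h : (n : ℤ) < k) : Efun x k = 0 := by
  unfold Efun; simp; omega

lemma det_eq_zero_of_left_kernel {m : ℕ} (M : Matrix (Fin m) (Fin m) R)
    (c : Fin m → R) (i0 : Fin m) (hc : c i0 = 1)
    (h : ∀ j, ∑ i, c i * M i j = 0) : M.det = 0 := by
  have hvm : Matrix.vecMul c M = 0 := by
    funext j
    simpa [Matrix.vecMul, dotProduct] using h j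
  have h2 : Matrix.vecMul c (M * M.adjugate) = 0 := by
    rw [← Matrix.vecMul_vecMul, hvm, Matrix.zero_vecMul]
  rw [Matrix.mul_adjugate] at h2
  have h3 := congrFun h2 i0
  simp only [Matrix.vecMul, dotProduct, Matrix.smul_apply, Matrix.one_apply,
    smul_eq_mul, mul_ite, mul_one, mul_zero, Finset.sum_ite_eq', Finset.mem_univ,
    if_true, Pi.zero_apply, hc, one_mul] at h3
  exact h3

lemma coeff_det_top {m : ℕ} (M : Matrix (Fin m) (Fin m) R[X])
    (h : ∀ i j, (M i j).natDegree ≤ 1) :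
    (M.det).coeff m = (Matrix.of fun i j => (M i j).coeff 1).det := by
  rw [Matrix.det_apply', Matrix.det_apply', Polynomial.finset_sum_coeff]
  refine Finset.sum_congr rfl fun σ _ => ?_
  rw [Polynomial.coeff_intCast_mul]
  congr 1
  have h4 := Polynomial.coeff_prod_of_natDegree_le (s := (univ : Finset (Fin m)))
    (fun i => M (σ i) i) 1 (fun p _ => h _ _)
  simpa using h4

lemma natDegree_det_le {m : ℕ} (M : Matrix (Fin m) (Fin m) R[X])
    (h : ∀ i j, (M i j).natDegree ≤ 1) : (M.det).natDegree ≤ m := by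
  rw [Matrix.det_apply']
  refine Polynomial.natDegree_sum_le_of_forall_le _ _ fun σ _ => ?_
  refine le_trans (Polynomial.natDegree_mul_le) ?_
  have h1 : (((Equiv.Perm.sign σ : ℤ) : R[X])).natDegree = 0 :=
    Polynomial.natDegree_intCast _
  rw [h1, zero_add]
  refine le_trans (Polynomial.natDegree_prod_le _ _) ?_
  have h2 : ∑ i : Fin m, (M (σ i) i).natDegree ≤ ∑ _i : Fin m, 1 :=
    Finset.sum_le_sum (fun i _ => h _ _)
  simpa using h2

lemma prod_pairs_snoc {n : ℕ} (f : Fin (n + 1) → Fin (n + 1) → R) :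
    ∏ p ∈ univ.filter (fun p : Fin (n + 1) × Fin (n + 1) => p.1 < p.2), f p.1 p.2
      = (∏ p ∈ univ.filter (fun p : Fin n × Fin n => p.1 < p.2),
          f p.1.castSucc p.2.castSucc) * ∏ i : Fin n, f i.castSucc (Fin.last n) := by
  rw [← Finset.prod_filter_mul_prod_filter_not
    (univ.filter (fun p : Fin (n + 1) × Fin (n + 1) => p.1 < p.2))
    (fun p => p.2 ≠ Fin.last n)]
  congr 1
  · rw [Finset.filter_filter]
    have himg : univ.filter (fun p : Fin (n + 1) × Fin (n + 1) =>
          p.1 < p.2 ∧ p.2 ≠ Fin.last n)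
        = Finset.image (fun q : Fin n × Fin n => (q.1.castSucc, q.2.castSucc))
            (univ.filter (fun q : Fin n × Fin n => q.1 < q.2)) := by
      ext p
      simp only [Finset.mem_filter, Finset.mem_univ, true_and, Finset.mem_image]
      constructor
      · rintro ⟨hlt, hne⟩
        obtain ⟨b, hb⟩ := Fin.exists_castSucc_eq.mpr hne
        have hne1 : p.1 ≠ Fin.last n := by
          intro h1
          rw [h1] at hlt
          exact absurd (lt_of_le_of_lt (Fin.le_last p.2) hlt) (lt_irrefl _)
        obtain ⟨a, ha⟩ := Fin.exists_castSucc_eq.mpr hne1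
        refine ⟨(a, b), ?_, ?_⟩
        · rw [← Fin.castSucc_lt_castSucc_iff, ha, hb]
          exact hlt
        · rw [Prod.ext_iff]
          exact ⟨ha, hb⟩
      · rintro ⟨q, hq, rfl⟩
        exact ⟨Fin.castSucc_lt_castSucc_iff.mpr hq, Fin.ne_last_of_lt (Fin.castSucc_lt_last q.2)⟩
    rw [himg, Finset.prod_image]
    intro a _ b _ hab
    rw [Prod.ext_iff] at hab ⊢
    exact ⟨Fin.castSucc_injective n hab.1, Fin.castSucc_injective n hab.2⟩
  · rw [Finset.filter_filter]
    have himg : univ.filter (fun p : Fin (n + 1) × Fin (n + 1) =>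
          p.1 < p.2 ∧ ¬p.2 ≠ Fin.last n)
        = Finset.image (fun i : Fin n => (i.castSucc, Fin.last n)) univ := by
      ext p
      simp only [Finset.mem_filter, Finset.mem_univ, true_and, Finset.mem_image,
        not_not]
      constructor
      · rintro ⟨hlt, hlast⟩
        have hne1 : p.1 ≠ Fin.last n := by
          intro h1
          rw [h1, hlast] at hlt
          exact absurd hlt (lt_irrefl _)
        obtain ⟨a, ha⟩ := Fin.exists_castSucc_eq.mpr hne1
        refine ⟨a, ?_⟩
        rw [Prod.ext_iff]
        exact ⟨ha, hlast.symm⟩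
      · rintro ⟨a, rfl⟩
        exact ⟨Fin.castSucc_lt_last a, rfl⟩
    rw [himg, Finset.prod_image]
    intro a _ b _ hab
    rw [Prod.ext_iff] at hab
    exact Fin.castSucc_injective n hab.1

lemma push_det {S : Type*} {R : Type*} [CommRing S] [CommRing R]
    (φ : S →+* R) {n m : ℕ} (y : Fin n → S) :
    (Matrix.of fun i j : Fin m =>
        Efun (fun i => φ (y i)) (2 * ((i : ℤ) + 1) - ((j : ℤ) + 1))).det
      = φ (Matrix.of fun i j : Fin m =>
          Efun y (2 * ((i : ℤ) + 1) - ((j : ℤ) + 1))).det := by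
  rw [RingHom.map_det]
  congr 1
  refine Matrix.ext fun i j => ?_
  simp only [RingHom.mapMatrix_apply, Matrix.map_apply, Matrix.of_apply]
  rw [E_map]

lemma push_prod {S : Type*} {R : Type*} [CommRing S] [CommRing R]
    (φ : S →+* R) {n : ℕ} (y : Fin n → S) :
    ∏ p ∈ univ.filter (fun p : Fin n × Fin n => p.1 < p.2),
        (φ (y p.1) + φ (y p.2))
      = φ (∏ p ∈ univ.filter (fun p : Fin n × Fin n => p.1 < p.2),
          (y p.1 + y p.2)) := by
  rw [map_prod]
  exact Finset.prod_congr rfl fun p _ => (map_add φ _ _).symm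


theorem key0 (n : ℕ) : ∀ {R : Type} [CommRing R] [Algebra ℚ R] (x : Fin n → R),
    (Matrix.of fun i j : Fin (n - 1) =>
        Efun x (2 * ((i : ℤ) + 1) - ((j : ℤ) + 1))).det
      = ∏ p ∈ univ.filter (fun p : Fin n × Fin n => p.1 < p.2), (x p.1 + x p.2) := by
  induction n with
  | zero =>
    intro R _ _ x
    have h1 : (univ.filter (fun p : Fin 0 × Fin 0 => p.1 < p.2)) = ∅ := by
      simp [Finset.filter_eq_empty_iff]
    rw [h1, Finset.prod_empty, Matrix.det_fin_zero]
  | succ n IH =>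
    rcases Nat.eq_zero_or_pos n with hn0 | hnpos
    · subst hn0
      intro R _ _ x
      have h1 : (univ.filter (fun p : Fin 1 × Fin 1 => p.1 < p.2)) = ∅ := by
        decide
      rw [h1, Finset.prod_empty, Matrix.det_fin_zero]
    obtain ⟨n', rfl⟩ : ∃ n', n = n' + 1 := ⟨n - 1, by omega⟩
    intro R _ _ x
    set B := MvPolynomial (Fin (n' + 1)) ℚ with hB
    set t : Fin (n' + 2) → Polynomial B :=
      Fin.snoc (fun i => Polynomial.C (MvPolynomial.X i)) Polynomial.X with ht
    set ψ : Polynomial B →+* R :=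
      Polynomial.eval₂RingHom
        ((MvPolynomial.aeval (fun i : Fin (n' + 1) => x i.castSucc)).toRingHom)
        (x (Fin.last (n' + 1))) with hψ
    have hψt : ∀ i, ψ (t i) = x i := by
      intro i
      refine Fin.lastCases ?_ ?_ i
      · rw [ht]
        simp only [Fin.snoc_last]
        rw [hψ]
        simp
      · intro j
        rw [ht]
        simp only [Fin.snoc_castSucc]
        rw [hψ]
        simp only [Polynomial.coe_eval₂RingHom, Polynomial.eval₂_C]
        exact MvPolynomial.aeval_X _ j
    have KI : (Matrix.of fun i j : Fin (n' + 1) =>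
          Efun t (2 * ((i : ℤ) + 1) - ((j : ℤ) + 1))).det
        = ∏ p ∈ univ.filter (fun p : Fin (n' + 2) × Fin (n' + 2) => p.1 < p.2),
            (t p.1 + t p.2) := by
      set Mt : Matrix (Fin (n' + 1)) (Fin (n' + 1)) (Polynomial B) :=
        Matrix.of (fun i j : Fin (n' + 1) =>
          Efun t (2 * ((i : ℤ) + 1) - ((j : ℤ) + 1))) with hMt
      set e : ℤ → B :=
        fun k => Efun (fun i : Fin (n' + 1) => (MvPolynomial.X i : B)) k with he
      have hent : ∀ k : ℤ, Efun t k
          = Polynomial.C (e k) + Polynomial.X * Polynomial.C (e (k - 1)) := by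
        intro k
        rw [ht, E_snoc, he]
        rw [E_map (Polynomial.C : B →+* Polynomial B) (fun i => MvPolynomial.X i) k,
          E_map (Polynomial.C : B →+* Polynomial B) (fun i => MvPolynomial.X i) (k - 1)]
      have hdegent : ∀ i j, (Mt i j).natDegree ≤ 1 := by
        intro i j
        rw [hMt, Matrix.of_apply, hent]
        compute_degree
      set prodsmall : B :=
        ∏ p ∈ univ.filter (fun p : Fin (n' + 1) × Fin (n' + 1) => p.1 < p.2),
          (MvPolynomial.X p.1 + MvPolynomial.X p.2) with hps
      set Rp : Polynomial B :=
        ∏ p ∈ univ.filter (fun p : Fin (n' + 2) × Fin (n' + 2) => p.1 < p.2),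
          (t p.1 + t p.2) with hRp0
      have hRp : Rp = Polynomial.C prodsmall
          * ∏ i : Fin (n' + 1), (Polynomial.X + Polynomial.C (MvPolynomial.X i)) := by
        rw [hRp0, prod_pairs_snoc (f := fun a b : Fin (n' + 2) => t a + t b), hps, map_prod]
        congr 1
        · refine Finset.prod_congr rfl fun p _ => ?_
          rw [ht]
          simp only [Fin.snoc_castSucc, map_add]
        · refine Finset.prod_congr rfl fun i _ => ?_
          rw [ht]
          simp only [Fin.snoc_castSucc, Fin.snoc_last]
          ring
      -- coefficient n'+1 of the determinant
      have hcoefL : (Mt.det).coeff (n' + 1)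
          = (Matrix.of fun i j : Fin (n' + 1) =>
              e (2 * ((i : ℤ) + 1) - ((j : ℤ) + 1) - 1)).det := by
        rw [coeff_det_top _ hdegent]
        congr 1
        refine Matrix.ext fun i j => ?_
        simp only [Matrix.of_apply, hMt, hent]
        have hXC : (Polynomial.X
              * Polynomial.C (e (2 * ((i : ℤ) + 1) - ((j : ℤ) + 1) - 1))).coeff 1
            = e (2 * ((i : ℤ) + 1) - ((j : ℤ) + 1) - 1) := by
          have h := Polynomial.coeff_X_mul
            (Polynomial.C (e (2 * ((i : ℤ) + 1) - ((j : ℤ) + 1) - 1))) 0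
          simpa using h
        rw [Polynomial.coeff_add, hXC, Polynomial.coeff_C]
        simp
      have hIH := IH (fun i : Fin (n' + 1) => (MvPolynomial.X i : B))
      have hdetN : (Matrix.of fun i j : Fin (n' + 1) =>
            e (2 * ((i : ℤ) + 1) - ((j : ℤ) + 1) - 1)).det = prodsmall := by
        rw [Matrix.det_succ_row_zero]
        rw [Finset.sum_eq_single 0]
        · have h00 : (Matrix.of fun i j : Fin (n' + 1) =>
              e (2 * ((i : ℤ) + 1) - ((j : ℤ) + 1) - 1)) 0 0 = 1 := by
            simp only [Matrix.of_apply]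
            have h0 : (2 * (((0 : Fin (n' + 1)) : ℤ) + 1)
                - (((0 : Fin (n' + 1)) : ℤ) + 1) - 1) = 0 := by
              simp
            rw [h0, he]
            exact E_zero _
          rw [h00, Fin.succAbove_zero]
          have hsub : ((Matrix.of fun i j : Fin (n' + 1) =>
                e (2 * ((i : ℤ) + 1) - ((j : ℤ) + 1) - 1)).submatrix Fin.succ Fin.succ)
              = Matrix.of (fun i j : Fin (n' + 1 - 1) =>
                  Efun (fun i : Fin (n' + 1) => (MvPolynomial.X i : B))
                    (2 * ((i : ℤ) + 1) - ((j : ℤ) + 1))) := by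
            refine Matrix.ext fun i j => ?_
            simp only [Matrix.submatrix_apply, Matrix.of_apply, he]
            congr 1
            have h1 : ((i.succ : Fin (n' + 1)) : ℤ) = (i : ℤ) + 1 := by
              simp [Fin.val_succ]
            have h2 : ((j.succ : Fin (n' + 1)) : ℤ) = (j : ℤ) + 1 := by
              simp [Fin.val_succ]
            rw [h1, h2]
            ring
          have hIH' : (Matrix.of (fun i j : Fin (n' + 1 - 1) =>
              Efun (fun i : Fin (n' + 1) => (MvPolynomial.X i : B))
                (2 * ((i : ℤ) + 1) - ((j : ℤ) + 1)))).det = prodsmall := by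
            rw [hps]
            exact hIH
          rw [hsub]
          simp only [Fin.val_zero, pow_zero, one_mul, one_smul, smul_eq_mul]
          exact hIH'
        · intro j _ hj
          have h0j : (Matrix.of fun i j : Fin (n' + 1) =>
              e (2 * ((i : ℤ) + 1) - ((j : ℤ) + 1) - 1)) 0 j = 0 := by
            simp only [Matrix.of_apply, he]
            refine E_of_neg _ ?_
            have hjpos : 0 < (j : ℤ) := by
              have := Fin.pos_iff_ne_zero.mpr hj
              exact_mod_cast this
            simp only [Fin.val_zero, Nat.cast_zero]
            omega
          rw [h0j]
          ring
        · intro h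
          exact absurd (Finset.mem_univ _) h
      have hcoefR : Rp.coeff (n' + 1) = prodsmall := by
        have hQmon : (∏ i : Fin (n' + 1),
            (Polynomial.X + Polynomial.C (MvPolynomial.X i : B))).Monic :=
          Polynomial.monic_prod_of_monic _ _ (fun i _ => Polynomial.monic_X_add_C _)
        have hQdeg : (∏ i : Fin (n' + 1),
            (Polynomial.X + Polynomial.C (MvPolynomial.X i : B))).natDegree = n' + 1 := by
          rw [Polynomial.natDegree_prod_of_monic _ _
            (fun i _ => Polynomial.monic_X_add_C _)]
          simp [Polynomial.natDegree_X_add_C]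
        have hc1 : (∏ i : Fin (n' + 1),
            (Polynomial.X + Polynomial.C (MvPolynomial.X i : B))).coeff (n' + 1) = 1 := by
          have hcn := hQmon.coeff_natDegree
          rw [hQdeg] at hcn
          exact hcn
        rw [hRp, Polynomial.coeff_C_mul, hc1, mul_one]
      have hdegL : (Mt.det).natDegree ≤ n' + 1 := natDegree_det_le _ hdegent
      have hdegR : Rp.natDegree ≤ n' + 1 := by
        rw [hRp]
        refine le_trans (Polynomial.natDegree_mul_le) ?_
        have hle := natDegree_prod_X_add_C_le
          (fun i : Fin (n' + 1) => (MvPolynomial.X i : B))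
        simp only [Polynomial.natDegree_C, zero_add]
        exact hle
      -- roots
      have hroot : ∀ l : Fin (n' + 1),
          (Mt.det - Rp).eval (-(MvPolynomial.X l : B)) = 0 := by
        intro l
        rw [Polynomial.eval_sub]
        have hR0 : Rp.eval (-(MvPolynomial.X l : B)) = 0 := by
          rw [hRp0, Polynomial.eval_prod]
          refine Finset.prod_eq_zero
            (i := (Fin.castSucc l, Fin.last (n' + 1))) ?_ ?_
          · simp only [Finset.mem_filter, Finset.mem_univ, true_and]
            exact Fin.castSucc_lt_last l
          · rw [ht]
            simp
        have hL0 : (Mt.det).eval (-(MvPolynomial.X l : B)) = 0 := by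
          set v : Fin (n' + 2) → B :=
            Fin.snoc (fun i => (MvPolynomial.X i : B)) (-(MvPolynomial.X l)) with hv
          have hvt : (fun i : Fin (n' + 2) =>
              Polynomial.eval (-(MvPolynomial.X l : B)) (t i)) = v := by
            funext i
            refine Fin.lastCases ?_ ?_ i
            · rw [ht, hv]
              simp
            · intro j'
              rw [ht, hv]
              simp
          have hMdet : (Mt.det).eval (-(MvPolynomial.X l : B))
              = (Matrix.of (fun i j : Fin (n' + 1) =>
                  Efun v (2 * ((i : ℤ) + 1) - ((j : ℤ) + 1)))).det := by
            have h1 : (Polynomial.evalRingHom (-(MvPolynomial.X l : B))) (Mt.det)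
                = ((Polynomial.evalRingHom (-(MvPolynomial.X l : B))).mapMatrix Mt).det :=
              RingHom.map_det _ _
            have h2 : ((Polynomial.evalRingHom (-(MvPolynomial.X l : B))).mapMatrix Mt)
                = Matrix.of (fun i j : Fin (n' + 1) =>
                    Efun v (2 * ((i : ℤ) + 1) - ((j : ℤ) + 1))) := by
              refine Matrix.ext fun i j => ?_
              simp only [RingHom.mapMatrix_apply, Matrix.map_apply, hMt, Matrix.of_apply]
              rw [← hvt, ← E_map (Polynomial.evalRingHom (-(MvPolynomial.X l : B))) t]
              rfl
            rw [← h2, ← h1]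
            rfl
          rw [hMdet]
          set Qq : Polynomial B :=
            ∏ i ∈ (univ : Finset (Fin (n' + 1))).erase l,
              (Polynomial.X + Polynomial.C (MvPolynomial.X i : B)) with hQq
          have hPv : (∏ i : Fin (n' + 2), (Polynomial.X + Polynomial.C (v i)))
              = Qq * (Polynomial.X ^ 2 - Polynomial.C ((MvPolynomial.X l : B) ^ 2)) := by
            rw [Fin.prod_univ_castSucc]
            simp only [hv, Fin.snoc_castSucc, Fin.snoc_last]
            rw [← Finset.mul_prod_erase univ
              (fun i => Polynomial.X + Polynomial.C (MvPolynomial.X i : B))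
              (Finset.mem_univ l), ← hQq]
            rw [Polynomial.C_neg, map_pow]
            ring
          have hdq : Qq.natDegree ≤ n' := by
            rw [hQq]
            refine le_trans (natDegree_prod_X_add_C_le' _ _) ?_
            simp [Finset.card_erase_of_mem]
          have hEv : ∀ k : ℤ, Efun v k
              = cf Qq n' k - (MvPolynomial.X l : B) ^ 2 * cf Qq n' (k - 2) := by
            intro k
            rw [E_eq_cf, hPv]
            exact cf_mul_X_sq_sub hdq _ k
          refine det_eq_zero_of_left_kernel _
            (fun i : Fin (n' + 1) => (MvPolynomial.X l : B) ^ (2 * (n' - (i : ℕ))))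
            (Fin.last n') ?_ ?_
          · simp
          · intro j
            set g : ℕ → B := fun i =>
              (MvPolynomial.X l : B) ^ (2 * ((n' + 1) - i))
                * cf Qq n' (2 * (i : ℤ) - (j : ℤ) - 1) with hg
            simp only [Matrix.of_apply]
            rw [Fin.sum_univ_eq_sum_range (fun i =>
              (MvPolynomial.X l : B) ^ (2 * (n' - i))
                * Efun v (2 * ((i : ℤ) + 1) - ((j : ℤ) + 1))) (n' + 1)]
            have hterm : ∀ i ∈ Finset.range (n' + 1),
                (MvPolynomial.X l : B) ^ (2 * (n' - i))
                  * Efun v (2 * ((i : ℤ) + 1) - ((j : ℤ) + 1))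
                = g (i + 1) - g i := by
              intro i hi
              have hi' : i ≤ n' := by
                have := Finset.mem_range.mp hi
                omega
              rw [hEv, hg]
              have ha1 : 2 * (((i + 1 : ℕ) : ℤ)) - (j : ℤ) - 1
                  = 2 * ((i : ℤ) + 1) - ((j : ℤ) + 1) := by
                push_cast
                ring
              have ha2 : 2 * ((i : ℤ) + 1) - ((j : ℤ) + 1) - 2
                  = 2 * (i : ℤ) - (j : ℤ) - 1 := by
                ring
              have ha3 : (n' + 1) - (i + 1) = n' - i := by
                omega
              have ha4 : 2 * ((n' + 1) - i) = 2 * (n' - i) + 2 := by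
                omega
              simp only [ha1, ha2, ha3, ha4, pow_add]
              ring
            rw [Finset.sum_congr rfl hterm, Finset.sum_range_sub g (n' + 1)]
            have hjlt : (j : ℤ) < (n' : ℤ) + 1 := by
              exact_mod_cast j.is_lt
            have hjnn : (0 : ℤ) ≤ (j : ℤ) := Int.ofNat_nonneg _
            have hgtop : g (n' + 1) = 0 := by
              show (MvPolynomial.X l : B) ^ (2 * ((n' + 1) - (n' + 1)))
                  * cf Qq n' (2 * (((n' + 1 : ℕ)) : ℤ) - (j : ℤ) - 1) = 0
              rw [cf_of_gt (by push_cast; omega), mul_zero]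
            have hg0 : g 0 = 0 := by
              show (MvPolynomial.X l : B) ^ (2 * ((n' + 1) - 0))
                  * cf Qq n' (2 * (((0 : ℕ)) : ℤ) - (j : ℤ) - 1) = 0
              rw [cf_of_neg (by push_cast; omega), mul_zero]
            rw [hgtop, hg0, sub_zero]
        rw [hL0, hR0, sub_zero]
      -- conclude
      have hinj : Function.Injective
          (fun l : Fin (n' + 1) => -(MvPolynomial.X l : B)) :=
        fun a b h => MvPolynomial.X_injective (neg_injective h)
      rcases eq_or_ne (Mt.det - Rp) 0 with hD | hD
      · exact sub_eq_zero.mp hD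
      · exfalso
        have hdeg : (Mt.det - Rp).natDegree ≤ n' + 1 :=
          le_trans (Polynomial.natDegree_sub_le _ _) (max_le hdegL hdegR)
        have hcn : (Mt.det - Rp).coeff (n' + 1) = 0 := by
          rw [Polynomial.coeff_sub, hcoefL, hdetN, hcoefR, sub_self]
        have hlt : (Mt.det - Rp).natDegree < n' + 1 := by
          rcases lt_or_eq_of_le hdeg with h | h
          · exact h
          · exfalso
            have hlc := Polynomial.leadingCoeff_ne_zero.mpr hD
            rw [Polynomial.leadingCoeff, h, hcn] at hlc
            exact hlc rfl
        have h0 := Polynomial.eq_zero_of_natDegree_lt_card_of_eval_eq_zero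
          (Mt.det - Rp) hinj hroot (by simpa using hlt)
        exact hD h0
    have hx : x = fun i => ψ (t i) := funext fun i => (hψt i).symm
    rw [hx]
    show (Matrix.of fun i j : Fin (n' + 1) =>
          Efun (fun i => ψ (t i)) (2 * ((i : ℤ) + 1) - ((j : ℤ) + 1))).det
        = ∏ p ∈ univ.filter (fun p : Fin (n' + 2) × Fin (n' + 2) => p.1 < p.2),
            (ψ (t p.1) + ψ (t p.2))
    rw [push_det ψ t, push_prod ψ t, KI]

theorem key {R : Type*} [CommRing R] [Algebra ℚ R] (n : ℕ) (x : Fin n → R) :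
    (Matrix.of fun i j : Fin (n - 1) =>
        Efun x (2 * ((i : ℤ) + 1) - ((j : ℤ) + 1))).det
      = ∏ p ∈ univ.filter (fun p : Fin n × Fin n => p.1 < p.2), (x p.1 + x p.2) := by
  have h0 := key0 n (R := MvPolynomial (Fin n) ℚ) (fun i => MvPolynomial.X i)
  set φ : MvPolynomial (Fin n) ℚ →+* R := (MvPolynomial.aeval x).toRingHom with hφ
  have hφx : ∀ i, φ (MvPolynomial.X i) = x i := by
    intro i
    rw [hφ]
    exact MvPolynomial.aeval_X _ i
  have hx : x = fun i => φ (MvPolynomial.X i) := funext fun i => (hφx i).symm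
  rw [hx]
  show (Matrix.of fun i j : Fin (n - 1) =>
        Efun (fun i => φ (MvPolynomial.X i)) (2 * ((i : ℤ) + 1) - ((j : ℤ) + 1))).det
      = ∏ p ∈ univ.filter (fun p : Fin n × Fin n => p.1 < p.2),
          (φ (MvPolynomial.X p.1) + φ (MvPolynomial.X p.2))
  rw [push_det φ _, push_prod φ _, h0]

lemma dbar_eq_E {R : Type*} [CommRing R] [Algebra ℚ R] (r : ℕ) (s : R)
    (α : Fin r → R) (k : ℤ) :
    (if 0 ≤ k ∧ k ≤ (r : ℤ) then
      ∑ i ∈ Finset.range (k.toNat + 1),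
        ((r - i).choose (k.toNat - i) : R) * esymmOn Finset.univ α i *
          (((1 : ℚ) / 2) • s) ^ (k.toNat - i)
    else 0) = Efun (fun i => α i + ((1 : ℚ) / 2) • s) k := by
  unfold Efun
  split_ifs with h
  · set c : R := ((1 : ℚ) / 2) • s with hc
    set K := k.toNat with hK
    have hKr : K ≤ r := by omega
    have hcard : #(univ : Finset (Fin r)) = r := by simp
    have hβ : esymmOn Finset.univ (fun i => α i + c) K
        = (∏ i : Fin r, (Polynomial.X + Polynomial.C (α i + c))).coeff (r - K) := by
      rw [Finset.prod_X_add_C_coeff _ _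
        (by simpa [hcard] using Nat.sub_le r K), hcard]
      have hrk : r - (r - K) = K := by omega
      rw [hrk]
      rfl
    have htay : (∏ i : Fin r, (Polynomial.X + Polynomial.C (α i + c)))
        = Polynomial.taylor c (∏ i : Fin r, (Polynomial.X + Polynomial.C (α i))) := by
      rw [Polynomial.taylor_apply, Polynomial.prod_comp]
      refine Finset.prod_congr rfl fun i _ => ?_
      rw [Polynomial.add_comp, Polynomial.X_comp, Polynomial.C_comp, map_add]
      ring
    have hPαdeg : (∏ i : Fin r, (Polynomial.X + Polynomial.C (α i))).natDegree ≤ r :=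
      natDegree_prod_X_add_C_le α
    have hhd : (Polynomial.hasseDeriv (r - K)
        (∏ i : Fin r, (Polynomial.X + Polynomial.C (α i)))).natDegree < K + 1 := by
      have := Polynomial.natDegree_hasseDeriv_le
        (∏ i : Fin r, (Polynomial.X + Polynomial.C (α i))) (r - K)
      omega
    have hαco : ∀ m : ℕ, m ≤ r →
        (∏ i : Fin r, (Polynomial.X + Polynomial.C (α i))).coeff m
          = esymmOn Finset.univ α (r - m) := by
      intro m hm
      rw [Finset.prod_X_add_C_coeff _ _ (by simpa [hcard] using hm), hcard]
      rfl
    rw [hβ, htay, Polynomial.taylor_coeff, Polynomial.eval_eq_sum_range' hhd]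
    conv_rhs => rw [← Finset.sum_range_reflect]
    refine Finset.sum_congr rfl fun j hj => ?_
    have hjK : j ≤ K := by
      have := Finset.mem_range.mp hj
      omega
    have h1 : K + 1 - 1 - j = K - j := by omega
    rw [h1, Polynomial.hasseDeriv_coeff]
    have h2 : K - j + (r - K) = r - j := by omega
    rw [h2, hαco (r - j) (by omega)]
    have h3 : r - (r - j) = j := by omega
    rw [h3]
    have hch : (r - j).choose (r - K) = (r - j).choose (K - j) := by
      have h4 : r - K = (r - j) - (K - j) := by omega
      rw [h4]
      exact Nat.choose_symm (by omega)
    rw [hch]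
  · rfl

end PPaux

theorem prod_pairs_eq_det_dbar {R : Type*} [CommRing R] [Algebra ℚ R] (r : ℕ)
    (s : R) (α : Fin r → R) :
    (∏ p ∈ Finset.univ.filter (fun p : Fin r × Fin r => p.1 < p.2), (s + α p.1 + α p.2))
      = (Matrix.of fun i j : Fin (r - 1) =>
          dbar r s α (2 * ((i : ℤ) + 1) - ((j : ℤ) + 1))).det := by
  classical
  set β : Fin r → R := fun i => α i + ((1 : ℚ) / 2) • s with hβ
  have hM : (Matrix.of fun i j : Fin (r - 1) =>
        dbar r s α (2 * ((i : ℤ) + 1) - ((j : ℤ) + 1)))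
      = (Matrix.of fun i j : Fin (r - 1) =>
          PPaux.Efun β (2 * ((i : ℤ) + 1) - ((j : ℤ) + 1))) := by
    refine Matrix.ext fun i j => ?_
    simp only [Matrix.of_apply]
    rw [hβ]
    exact PPaux.dbar_eq_E r s α _
  rw [hM, PPaux.key r β]
  refine Finset.prod_congr rfl fun p _ => ?_
  have hcc : ((1 : ℚ) / 2) • s + ((1 : ℚ) / 2) • s = s := by
    rw [← add_smul]
    norm_num
  rw [hβ]
  calc s + α p.1 + α p.2 = α p.1 + α p.2 + (((1 : ℚ) / 2) • s + ((1 : ℚ) / 2) • s) := by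
        rw [hcc]
        ring
    _ = (α p.1 + ((1 : ℚ) / 2) • s) + (α p.2 + ((1 : ℚ) / 2) • s) := by ring
end
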